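/- arXiv:2512.06680 — 10 statements merged into one kernel-verified Lean document; each statement's English description precedes it below -/
import Mathlib

section
/- Let (L, [-,-], s) be a Lie superalgebra over a field K of characteristic 2. A map s̄ : L₁ → L₀ is a squaring on L satisfying the Jacobi identity (i.e. s̄(λx) = λ²s̄(x), s̄(x+y) = s̄(x) + s̄(y) + [x,y] for all x,y ∈ L₁ and λ ∈ K, and [s̄(x), y] = [x,[x,y]] for all x ∈ L₁ and y ∈ L) if and only if there exists a 2-semilinear map g : L₁ → Z(L)₀ (i.e. g(λx + y) = λ²g(x) + g(y) for all λ ∈ K, x,y ∈ L₁) with values in the even part of the center of L such that s̄(x) = s(x) + g(x) for all x ∈ L₁. -/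
/-- A Lie superalgebra over a field of characteristic 2, encoded as a predicate on the
data: a `ℤ/2`-grading given by complementary submodules `ev` and `od`, a bilinear
symmetric bracket `br` (in characteristic 2 skew-symmetry is symmetry), and a squaring
`sq : L → L` whose value is only relevant on `od`. -/
structure IsLieSuper2 (K : Type*) [Field K] {L : Type*} [AddCommGroup L] [Module K L]
    (ev od : Submodule K L) (br : L → L → L) (sq : L → L) : Prop where
  compl : IsCompl ev od
  add_left : ∀ x y z : L, br (x + y) z = br x z + br y z
  smul_left : ∀ (c : K) (x y : L), br (c • x) y = c • br x y
  symm : ∀ x y : L, br x y = br y x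
  alt_ev : ∀ x ∈ ev, br x x = 0
  grade_ee : ∀ x ∈ ev, ∀ y ∈ ev, br x y ∈ ev
  grade_eo : ∀ x ∈ ev, ∀ y ∈ od, br x y ∈ od
  grade_oo : ∀ x ∈ od, ∀ y ∈ od, br x y ∈ ev
  jacobi_ev : ∀ x ∈ ev, ∀ y ∈ ev, ∀ z : L,
    br (br x y) z = br x (br y z) + br y (br x z)
  sq_mem : ∀ x ∈ od, sq x ∈ ev
  sq_smul : ∀ (c : K), ∀ x ∈ od, sq (c • x) = (c * c) • sq x
  sq_add : ∀ x ∈ od, ∀ y ∈ od, sq (x + y) = sq x + sq y + br x y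
  sq_jacobi : ∀ x ∈ od, ∀ z : L, br (sq x) z = br x (br x z)

/-- Let `(L, br, sq)` be a Lie superalgebra over a field `K` of
characteristic 2.  A map `s' : L₁ → L₀` is a squaring on `L` satisfying the Jacobi
identity if and only if there exists a 2-semilinear map `g : L₁ → Z(L)₀` with values in
the even part of the center of `L` such that `s' x = sq x + g x` for all odd `x`. -/
theorem squaring_iff_exists_central_semilinear
    {K L : Type*} [Field K] [CharP K 2] [AddCommGroup L] [Module K L]
    (ev od : Submodule K L) (br : L → L → L) (sq : L → L)
    (hL : IsLieSuper2 K ev od br sq) (s' : L → L) :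
    ((∀ x ∈ od, s' x ∈ ev) ∧
     (∀ (c : K), ∀ x ∈ od, s' (c • x) = (c * c) • s' x) ∧
     (∀ x ∈ od, ∀ y ∈ od, s' (x + y) = s' x + s' y + br x y) ∧
     (∀ x ∈ od, ∀ z : L, br (s' x) z = br x (br x z))) ↔
    (∃ g : L → L,
      (∀ x ∈ od, g x ∈ ev) ∧
      (∀ x ∈ od, ∀ z : L, br (g x) z = 0) ∧
      (∀ (c : K), ∀ x ∈ od, ∀ y ∈ od, g (c • x + y) = (c * c) • g x + g y) ∧
      (∀ x ∈ od, s' x = sq x + g x)) := by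
  have two : (2 : K) = 0 := CharP.cast_eq_zero K 2
  have hvv : ∀ v : L, v + v = 0 := by
    intro v
    have : ((2 : K)) • v = v + v := by rw [two_smul]
    rw [two, zero_smul] at this; exact this.symm
  constructor
  · rintro ⟨hmem, hsmul, hadd, hjac⟩
    refine ⟨fun x => s' x + sq x, ?_, ?_, ?_, ?_⟩
    · intro x hx; exact ev.add_mem (hmem x hx) (hL.sq_mem x hx)
    · intro x hx z
      rw [hL.add_left, hjac x hx z, hL.sq_jacobi x hx z, hvv]
    · intro c x hx y hy
      have hcx : c • x ∈ od := od.smul_mem c hx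
      dsimp only
      rw [hadd _ hcx _ hy, hL.sq_add _ hcx _ hy, hsmul c x hx, hL.sq_smul c x hx,
        smul_add]
      abel_nf
      rw [two_smul, hvv, zero_add]
    · intro x hx
      dsimp only
      rw [add_left_comm, hvv (sq x), add_zero]
  · rintro ⟨g, hgev, hgcen, hglin, hgs⟩
    have hg0 : g 0 = 0 := by
      have := hglin 1 0 od.zero_mem 0 od.zero_mem
      simp only [one_mul, one_smul, smul_zero, add_zero] at this
      rw [this, hvv]
    have hgsmul : ∀ (c : K), ∀ x ∈ od, g (c • x) = (c * c) • g x := by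
      intro c x hx
      have := hglin c x hx 0 od.zero_mem
      rwa [add_zero, hg0, add_zero] at this
    have hgadd : ∀ x ∈ od, ∀ y ∈ od, g (x + y) = g x + g y := by
      intro x hx y hy
      have := hglin 1 x hx y hy
      rwa [one_smul, one_mul, one_smul] at this
    refine ⟨?_, ?_, ?_, ?_⟩
    · intro x hx; rw [hgs x hx]; exact ev.add_mem (hL.sq_mem x hx) (hgev x hx)
    · intro c x hx
      have hcx : c • x ∈ od := od.smul_mem c hx
      rw [hgs _ hcx, hL.sq_smul c x hx, hgsmul c x hx, hgs x hx, smul_add]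
    · intro x hx y hy
      rw [hgs _ (od.add_mem hx hy), hL.sq_add x hx y hy, hgadd x hx y hy,
        hgs x hx, hgs y hy]
      abel
    · intro x hx z
      rw [hgs x hx, hL.add_left, hL.sq_jacobi x hx z, hgcen x hx z, add_zero]
end

section
/- Let A = A₀ ⊕ A₁ be an associative superalgebra over a field K of characteristic 2, regarded as a Lie superalgebra with bracket [x,y] = xy + yx and squaring s(a) = a² for a ∈ A₁. Let μ : A × A → A be a Hochschild 2-cocycle, i.e. a bilinear map with xμ(y,z) + μ(xy,z) + μ(x,yz) + μ(x,y)z = 0 for all x,y,z ∈ A. Define φ_μ(x,y) = μ(x,y) + μ(y,x) for x,y ∈ A and ω_μ(x) = μ(x,x) for x ∈ A₁. Then (φ_μ, ω_μ) is a 2-cocycle of the Lie superalgebra A with values in the adjoint module A: (i) ω_μ(λx) = λ²ω_μ(x) and ω_μ(x+y) = ω_μ(x) + ω_μ(y) + φ_μ(x,y) for x,y ∈ A₁, λ ∈ K; (ii) [x, φ_μ(y,z)] + [y, φ_μ(z,x)] + [z, φ_μ(x,y)] + φ_μ([x,y], z) + φ_μ([y,z], x) + φ_μ([z,x], y) = 0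 for all x,y,z ∈ A; (iii) [x, φ_μ(x,z)] + [z, ω_μ(x)] + φ_μ(s(x), z) + φ_μ([x,z], x) = 0 for all x ∈ A₁ and z ∈ A. -/
/-- Let `A` be an associative superalgebra over a field of
characteristic 2, viewed as a Lie superalgebra with bracket `[x,y] = xy + yx` and
squaring `s(a) = a²` on odd elements.  If `μ` is a bilinear Hochschild 2-cocycle on
`A`, then `(φ_μ, ω_μ)` with `φ_μ(x,y) = μ(x,y) + μ(y,x)` and `ω_μ(x) = μ(x,x)` is a
2-cocycle of the Lie superalgebra `A` with adjoint coefficients. -/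
theorem hochschild_cocycle_gives_lie_cocycle
    {K A : Type*} [Field K] [CharP K 2] [AddCommGroup A] [Module K A]
    (ev od : Submodule K A) (mul : A → A → A)
    (compl : IsCompl ev od)
    (mul_add_left : ∀ a b c : A, mul (a + b) c = mul a c + mul b c)
    (mul_add_right : ∀ a b c : A, mul a (b + c) = mul a b + mul a c)
    (mul_smul_left : ∀ (k : K) (a b : A), mul (k • a) b = k • mul a b)
    (mul_smul_right : ∀ (k : K) (a b : A), mul a (k • b) = k • mul a b)
    (mul_assoc' : ∀ a b c : A, mul (mul a b) c = mul a (mul b c))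
    (grade_ee : ∀ a ∈ ev, ∀ b ∈ ev, mul a b ∈ ev)
    (grade_eo : ∀ a ∈ ev, ∀ b ∈ od, mul a b ∈ od)
    (grade_oe : ∀ a ∈ od, ∀ b ∈ ev, mul a b ∈ od)
    (grade_oo : ∀ a ∈ od, ∀ b ∈ od, mul a b ∈ ev)
    (μ : A → A → A)
    (μ_add_left : ∀ a b c : A, μ (a + b) c = μ a c + μ b c)
    (μ_add_right : ∀ a b c : A, μ a (b + c) = μ a b + μ a c)
    (μ_smul_left : ∀ (k : K) (a b : A), μ (k • a) b = k • μ a b)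
    (μ_smul_right : ∀ (k : K) (a b : A), μ a (k • b) = k • μ a b)
    (hHoch : ∀ x y z : A,
      mul x (μ y z) + μ (mul x y) z + μ x (mul y z) + mul (μ x y) z = 0) :
    -- (i) `ω_μ` is a squaring-type cochain with polar form `φ_μ`
    (∀ (c : K), ∀ x ∈ od, μ (c • x) (c • x) = (c * c) • μ x x) ∧
    (∀ x ∈ od, ∀ y ∈ od,
      μ (x + y) (x + y) = μ x x + μ y y + (μ x y + μ y x)) ∧
    -- (ii) the Chevalley–Eilenberg 3-cocycle condition for `φ_μ`
    (∀ x y z : A,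
      (mul x (μ y z + μ z y) + mul (μ y z + μ z y) x) +
      (mul y (μ z x + μ x z) + mul (μ z x + μ x z) y) +
      (mul z (μ x y + μ y x) + mul (μ x y + μ y x) z) +
      (μ (mul x y + mul y x) z + μ z (mul x y + mul y x)) +
      (μ (mul y z + mul z y) x + μ x (mul y z + mul z y)) +
      (μ (mul z x + mul x z) y + μ y (mul z x + mul x z)) = 0) ∧
    -- (iii) the squaring-cocycle condition `δ²ω_μ = 0`
    (∀ x ∈ od, ∀ z : A,
      (mul x (μ x z + μ z x) + mul (μ x z + μ z x) x) +
      (mul z (μ x x) + mul (μ x x) z) +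
      (μ (mul x x) z + μ z (mul x x)) +
      (μ (mul x z + mul z x) x + μ x (mul x z + mul z x)) = 0) := by
  refine ⟨?_, ?_, ?_, ?_⟩
  · intro c x _
    rw [μ_smul_left, μ_smul_right, smul_smul]
  · intro x _ y _
    rw [μ_add_left, μ_add_right, μ_add_right]
    abel
  · intro x y z
    have h1 := hHoch x y z
    have h2 := hHoch y z x
    have h3 := hHoch z x y
    have h4 := hHoch x z y
    have h5 := hHoch z y x
    have h6 := hHoch y x z
    calc _ = (mul x (μ y z) + μ (mul x y) z + μ x (mul y z) + mul (μ x y) z)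
          + (mul y (μ z x) + μ (mul y z) x + μ y (mul z x) + mul (μ y z) x)
          + (mul z (μ x y) + μ (mul z x) y + μ z (mul x y) + mul (μ z x) y)
          + (mul x (μ z y) + μ (mul x z) y + μ x (mul z y) + mul (μ x z) y)
          + (mul z (μ y x) + μ (mul z y) x + μ z (mul y x) + mul (μ z y) x)
          + (mul y (μ x z) + μ (mul y x) z + μ y (mul x z) + mul (μ y x) z) := by
            simp only [mul_add_left, mul_add_right, μ_add_left, μ_add_right]
            abel
      _ = 0 := by rw [h1, h2, h3, h4, h5, h6]; simp
  · intro x _ z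
    have h1 := hHoch x x z
    have h2 := hHoch x z x
    have h3 := hHoch z x x
    calc _ = (mul x (μ x z) + μ (mul x x) z + μ x (mul x z) + mul (μ x x) z)
          + (mul x (μ z x) + μ (mul x z) x + μ x (mul z x) + mul (μ x z) x)
          + (mul z (μ x x) + μ (mul z x) x + μ z (mul x x) + mul (μ z x) x) := by
            simp only [mul_add_left, mul_add_right, μ_add_left, μ_add_right]
            abel
      _ = 0 := by rw [h1, h2, h3]; simp
end

section
/- Let K be a field of characteristic 2, A an associative supercommutative superalgebra over K, (L, [-,-], s) a Lie superalgebra over K which is also an A-module, and ρ : L → Der(A) an A-linear morphism of Lie superalgebras. Fix a homogeneous K-basis of L. If the three Lie–Rinehart compatibility conditions — [x, ay] = a[x,y] + ρ_x(a)y for all a ∈ A, y ∈ L; s(ax) = a²s(x) + ρ_{ax}(a)x for all a ∈ A₀ with x odd; s(ax) = ρ_{ax}(a)x for all a ∈ A₁ with x even — hold whenever x runs over the chosen basis of L, then they hold for all x ∈ L. -/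
/-- An associative supercommutative superalgebra over a field of characteristic 2,
encoded as a predicate on the data: complementary submodules `ev`, `od` and a bilinear
associative commutative product `mul` with `a² = 0` for odd `a`. -/
structure IsSuperComm2 (K : Type*) [Field K] {A : Type*} [AddCommGroup A] [Module K A]
    (ev od : Submodule K A) (mul : A → A → A) : Prop where
  compl : IsCompl ev od
  add_left : ∀ a b c : A, mul (a + b) c = mul a c + mul b c
  smul_left : ∀ (k : K) (a b : A), mul (k • a) b = k • mul a b
  comm : ∀ a b : A, mul a b = mul b a
  assoc : ∀ a b c : A, mul (mul a b) c = mul a (mul b c)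
  alt_od : ∀ a ∈ od, mul a a = 0
  grade_ee : ∀ a ∈ ev, ∀ b ∈ ev, mul a b ∈ ev
  grade_eo : ∀ a ∈ ev, ∀ b ∈ od, mul a b ∈ od
  grade_oo : ∀ a ∈ od, ∀ b ∈ od, mul a b ∈ ev
/-- The underlying data of a Lie-Rinehart superalgebra in characteristic 2, *without*
the three Lie-Rinehart compatibility conditions between the bracket/squaring and the
`A`-module structure. -/
structure IsLieRinehartCore2 (K : Type*) [Field K] {A L : Type*}
    [AddCommGroup A] [Module K A] [AddCommGroup L] [Module K L]
    (evA odA : Submodule K A) (mulA : A → A → A)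
    (evL odL : Submodule K L) (br : L → L → L) (sq : L → L)
    (act : A → L → L) (ρ : L → A → A) : Prop where
  commA : IsSuperComm2 K evA odA mulA
  lieL : IsLieSuper2 K evL odL br sq
  act_add_left : ∀ (a b : A) (x : L), act (a + b) x = act a x + act b x
  act_add_right : ∀ (a : A) (x y : L), act a (x + y) = act a x + act a y
  act_smul_left : ∀ (k : K) (a : A) (x : L), act (k • a) x = k • act a x
  act_smul_right : ∀ (k : K) (a : A) (x : L), act a (k • x) = k • act a x
  act_mulA : ∀ (a b : A) (x : L), act (mulA a b) x = act a (act b x)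
  act_grade_ee : ∀ a ∈ evA, ∀ x ∈ evL, act a x ∈ evL
  act_grade_eo : ∀ a ∈ evA, ∀ x ∈ odL, act a x ∈ odL
  act_grade_oe : ∀ a ∈ odA, ∀ x ∈ evL, act a x ∈ odL
  act_grade_oo : ∀ a ∈ odA, ∀ x ∈ odL, act a x ∈ evL
  rho_add : ∀ (x y : L) (a : A), ρ (x + y) a = ρ x a + ρ y a
  rho_smul : ∀ (k : K) (x : L) (a : A), ρ (k • x) a = k • ρ x a
  rho_arg_add : ∀ (x : L) (a b : A), ρ x (a + b) = ρ x a + ρ x b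
  rho_arg_smul : ∀ (x : L) (k : K) (a : A), ρ x (k • a) = k • ρ x a
  rho_der : ∀ (x : L) (a b : A), ρ x (mulA a b) = mulA (ρ x a) b + mulA a (ρ x b)
  rho_br : ∀ (x y : L) (a : A), ρ (br x y) a = ρ x (ρ y a) + ρ y (ρ x a)
  rho_sq : ∀ x ∈ odL, ∀ a : A, ρ (sq x) a = ρ x (ρ x a)
  rho_grade_ee : ∀ x ∈ evL, ∀ a ∈ evA, ρ x a ∈ evA
  rho_grade_eo : ∀ x ∈ evL, ∀ a ∈ odA, ρ x a ∈ odA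
  rho_grade_oe : ∀ x ∈ odL, ∀ a ∈ evA, ρ x a ∈ odA
  rho_grade_oo : ∀ x ∈ odL, ∀ a ∈ odA, ρ x a ∈ evA
  rho_act : ∀ (a : A) (x : L) (b : A), ρ (act a x) b = mulA a (ρ x b)

/-- If the three Lie-Rinehart compatibility conditions hold whenever
`x` runs over a fixed homogeneous basis `e` of `L`, then they hold for all `x ∈ L`. -/
theorem lieRinehart_conditions_of_basis
    {K A L : Type*} [Field K] [CharP K 2]
    [AddCommGroup A] [Module K A] [AddCommGroup L] [Module K L]
    (evA odA : Submodule K A) (mulA : A → A → A)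
    (evL odL : Submodule K L) (br : L → L → L) (sq : L → L)
    (act : A → L → L) (ρ : L → A → A)
    (hcore : IsLieRinehartCore2 K evA odA mulA evL odL br sq act ρ)
    (ι : Type*) (e : ι → L)
    (hhom : ∀ i, e i ∈ evL ∨ e i ∈ odL)
    (hindep : LinearIndependent K e)
    (hspan : ⊤ ≤ Submodule.span K (Set.range e))
    (h1 : ∀ (i : ι) (a : A) (y : L),
      br (e i) (act a y) = act a (br (e i) y) + act (ρ (e i) a) y)
    (h2 : ∀ i, e i ∈ odL → ∀ a ∈ evA,
      sq (act a (e i)) = act (mulA a a) (sq (e i)) + act (ρ (act a (e i)) a) (e i))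
    (h3 : ∀ i, e i ∈ evL → ∀ a ∈ odA,
      sq (act a (e i)) = act (ρ (act a (e i)) a) (e i)) :
    (∀ (x y : L) (a : A), br x (act a y) = act a (br x y) + act (ρ x a) y) ∧
    (∀ a ∈ evA, ∀ x ∈ odL,
      sq (act a x) = act (mulA a a) (sq x) + act (ρ (act a x) a) x) ∧
    (∀ a ∈ odA, ∀ x ∈ evL,
      sq (act a x) = act (ρ (act a x) a) x) := by
  obtain ⟨hA, hL, actal, actar, actsl, actsr, actm, agee, ageo, agoe, agoo,
    rad, rsm, raa, ras, rder, rbr, rsq2, rgee, rgeo, rgoe, rgoo, ract⟩ := hcore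
  -- basic zero lemmas
  have act0r : ∀ a : A, act a 0 = 0 := by
    intro a; have h := actar a 0 0; rw [add_zero] at h
    exact left_eq_add.mp h
  have act0l : ∀ x : L, act 0 x = 0 := by
    intro x; have h := actal 0 0 x; rw [add_zero] at h
    exact left_eq_add.mp h
  have br0l : ∀ y : L, br 0 y = 0 := by
    intro y; have h := hL.add_left 0 0 y; rw [add_zero] at h
    exact left_eq_add.mp h
  have rho0l : ∀ a : A, ρ 0 a = 0 := by
    intro a; have h := rad 0 0 a; rw [add_zero] at h
    exact left_eq_add.mp h
  have sq0 : sq 0 = 0 := by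
    have h := hL.sq_add 0 odL.zero_mem 0 odL.zero_mem
    rw [add_zero, br0l, add_zero] at h
    exact left_eq_add.mp h
  have mulr : ∀ a b c : A, mulA a (b + c) = mulA a b + mulA a c := by
    intro a b c; rw [hA.comm, hA.add_left, hA.comm b a, hA.comm c a]
  have mulsr : ∀ (k : K) (a b : A), mulA a (k • b) = k • mulA a b := by
    intro k a b; rw [hA.comm, hA.smul_left, hA.comm]
  -- Part 1
  have part1 : ∀ (x y : L) (a : A),
      br x (act a y) = act a (br x y) + act (ρ x a) y := by
    intro x
    have hx : x ∈ Submodule.span K (Set.range e) := hspan Submodule.mem_top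
    induction hx using Submodule.span_induction with
    | mem z hz => obtain ⟨i, rfl⟩ := hz; exact fun y a => h1 i a y
    | zero => intro y a; rw [br0l, br0l, rho0l, act0r, act0l, add_zero]
    | add u v hu hv ihu ihv =>
      intro y a
      rw [hL.add_left, hL.add_left, rad, actar, actal, ihu, ihv]
      abel
    | smul c u hu ihu =>
      intro y a
      rw [hL.smul_left, hL.smul_left, rsm, actsr, actsl, ihu, smul_add]
  -- the key cross-term identity
  have cross : ∀ (a : A) (x y : L), br (act a x) (act a y)
      = act (mulA a a) (br x y) + act (mulA a (ρ x a)) y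
        + act (mulA a (ρ y a)) x := by
    intro a x y
    calc br (act a x) (act a y)
        = act a (br (act a x) y) + act (ρ (act a x) a) y := part1 _ y a
      _ = act a (act a (br y x) + act (ρ y a) x) + act (mulA a (ρ x a)) y := by
          rw [ract, hL.symm (act a x) y, part1 y x a]
      _ = act (mulA a a) (br x y) + act (mulA a (ρ x a)) y
            + act (mulA a (ρ y a)) x := by
          rw [actar, ← actm, ← actm, hL.symm y x]; abel
  -- projections onto the odd and even parts
  have compl' := hL.compl.symm
  set prjo : L →ₗ[K] odL := Submodule.projectionOnto odL evL compl' with hprjo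
  set prje : L →ₗ[K] evL := Submodule.projectionOnto evL odL hL.compl with hprje
  have food : ∀ x ∈ odL, ((prjo x : L)) = x := by
    intro x hx
    have h := Submodule.linearProjOfIsCompl_apply_left compl' ⟨x, hx⟩
    exact congrArg Subtype.val h
  have foev : ∀ x ∈ evL, ((prjo x : L)) = 0 := by
    intro x hx
    rw [Submodule.projectionOnto_apply_of_mem_right compl' hx]; rfl
  have feev : ∀ x ∈ evL, ((prje x : L)) = x := by
    intro x hx
    have h := Submodule.linearProjOfIsCompl_apply_left hL.compl ⟨x, hx⟩
    exact congrArg Subtype.val h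
  have feod : ∀ x ∈ odL, ((prje x : L)) = 0 := by
    intro x hx
    rw [Submodule.projectionOnto_apply_of_mem_right hL.compl hx]; rfl
  refine ⟨part1, ?_, ?_⟩
  · -- Part 2
    intro a ha x hx
    have P0 : sq (act a 0) = act (mulA a a) (sq 0) + act (mulA a (ρ 0 a)) 0 := by
      rw [act0r, sq0, act0r, act0r, add_zero]
    have key : ∀ z : L, sq (act a (prjo z))
        = act (mulA a a) (sq (prjo z)) + act (mulA a (ρ (prjo z) a)) (prjo z) := by
      intro z
      have hz : z ∈ Submodule.span K (Set.range e) := hspan Submodule.mem_top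
      induction hz using Submodule.span_induction with
      | mem w hw =>
        obtain ⟨i, rfl⟩ := hw
        rcases hhom i with hev | hod
        · rw [foev _ hev]; exact P0
        · rw [food _ hod]
          have h := h2 i hod a ha
          rwa [ract] at h
      | zero => rw [map_zero]; exact P0
      | add u v hu hv ihu ihv =>
        rw [map_add]
        have hmu : ((prjo u : L)) ∈ odL := (prjo u).2
        have hmv : ((prjo v : L)) ∈ odL := (prjo v).2
        have hau : act a (prjo u) ∈ odL := ageo a ha _ hmu
        have hav : act a (prjo v) ∈ odL := ageo a ha _ hmv
        push_cast
        rw [actar, hL.sq_add _ hau _ hav, ihu, ihv, cross,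
          hL.sq_add _ hmu _ hmv, rad, mulr]
        simp only [actar, actal]
        abel
      | smul c u hu ihu =>
        rw [map_smul]
        have hmu : ((prjo u : L)) ∈ odL := (prjo u).2
        have hau : act a (prjo u) ∈ odL := ageo a ha _ hmu
        push_cast
        rw [actsr c a _, hL.sq_smul c _ hau, ihu, hL.sq_smul c _ hmu,
          rsm c _ a, mulsr c a (ρ (prjo u : L) a),
          actsr (c * c) (mulA a a) (sq (prjo u : L)),
          actsl c (mulA a (ρ (prjo u : L) a)) (c • (prjo u : L)),
          actsr c (mulA a (ρ (prjo u : L) a)) (prjo u : L),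
          smul_smul, smul_add]
    have h := key x
    rw [food x hx] at h
    rwa [ract]
  · -- Part 3
    intro a ha x hx
    have maa : mulA a a = 0 := hA.alt_od a ha
    have P0 : sq (act a 0) = act (mulA a (ρ 0 a)) 0 := by
      rw [act0r, sq0, act0r]
    have key : ∀ z : L, sq (act a (prje z))
        = act (mulA a (ρ (prje z) a)) (prje z) := by
      intro z
      have hz : z ∈ Submodule.span K (Set.range e) := hspan Submodule.mem_top
      induction hz using Submodule.span_induction with
      | mem w hw =>
        obtain ⟨i, rfl⟩ := hw
        rcases hhom i with hev | hod
        · rw [feev _ hev]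
          have h := h3 i hev a ha
          rwa [ract] at h
        · rw [feod _ hod]; exact P0
      | zero => rw [map_zero]; exact P0
      | add u v hu hv ihu ihv =>
        rw [map_add]
        have hmu : ((prje u : L)) ∈ evL := (prje u).2
        have hmv : ((prje v : L)) ∈ evL := (prje v).2
        have hau : act a (prje u) ∈ odL := agoe a ha _ hmu
        have hav : act a (prje v) ∈ odL := agoe a ha _ hmv
        push_cast
        rw [actar, hL.sq_add _ hau _ hav, ihu, ihv, cross, maa, act0l,
          rad, mulr]
        simp only [actar, actal]
        abel
      | smul c u hu ihu =>
        rw [map_smul]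
        have hmu : ((prje u : L)) ∈ evL := (prje u).2
        have hau : act a (prje u) ∈ odL := agoe a ha _ hmu
        push_cast
        rw [actsr c a _, hL.sq_smul c _ hau, ihu,
          rsm c _ a, mulsr c a (ρ (prje u : L) a),
          actsl c (mulA a (ρ (prje u : L) a)) (c • (prje u : L)),
          actsr c (mulA a (ρ (prje u : L) a)) (prje u : L),
          smul_smul]
    have h := key x
    rw [feev x hx] at h
    rwa [ract]
end

section
/- Let (A, L, ρ) be a Lie-Rinehart superalgebra over a field K of characteristic 2. Then the Z/2-graded vector space A ⊕ L (with (A⊕L)₀ = A₀ ⊕ L₀ and (A⊕L)₁ = A₁ ⊕ L₁) is a Lie superalgebra with the bracket [a + x, b + y] := ρ_x(b) + ρ_y(a) + [x,y] for all a,b ∈ A and x,y ∈ L, and the squaring s(a + x) := ρ_x(a) + s(x) for all a ∈ A₁ and x ∈ L₁. -/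
/-- A Lie-Rinehart superalgebra in characteristic 2: an associative supercommutative
superalgebra `A`, a Lie superalgebra `L` which is an `A`-module via `act`, and an
`A`-linear morphism of Lie superalgebras `ρ : L → Der(A)` (encoded as a bilinear-type
map `ρ : L → A → A` each `ρ x` being a derivation), subject to the three
Lie-Rinehart compatibility conditions. -/
structure IsLieRinehart2 (K : Type*) [Field K] {A L : Type*}
    [AddCommGroup A] [Module K A] [AddCommGroup L] [Module K L]
    (evA odA : Submodule K A) (mulA : A → A → A)
    (evL odL : Submodule K L) (br : L → L → L) (sq : L → L)
    (act : A → L → L) (ρ : L → A → A) : Prop where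
  commA : IsSuperComm2 K evA odA mulA
  lieL : IsLieSuper2 K evL odL br sq
  act_add_left : ∀ (a b : A) (x : L), act (a + b) x = act a x + act b x
  act_add_right : ∀ (a : A) (x y : L), act a (x + y) = act a x + act a y
  act_smul_left : ∀ (k : K) (a : A) (x : L), act (k • a) x = k • act a x
  act_smul_right : ∀ (k : K) (a : A) (x : L), act a (k • x) = k • act a x
  act_mulA : ∀ (a b : A) (x : L), act (mulA a b) x = act a (act b x)
  act_grade_ee : ∀ a ∈ evA, ∀ x ∈ evL, act a x ∈ evL
  act_grade_eo : ∀ a ∈ evA, ∀ x ∈ odL, act a x ∈ odL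
  act_grade_oe : ∀ a ∈ odA, ∀ x ∈ evL, act a x ∈ odL
  act_grade_oo : ∀ a ∈ odA, ∀ x ∈ odL, act a x ∈ evL
  rho_add : ∀ (x y : L) (a : A), ρ (x + y) a = ρ x a + ρ y a
  rho_smul : ∀ (k : K) (x : L) (a : A), ρ (k • x) a = k • ρ x a
  rho_arg_add : ∀ (x : L) (a b : A), ρ x (a + b) = ρ x a + ρ x b
  rho_arg_smul : ∀ (x : L) (k : K) (a : A), ρ x (k • a) = k • ρ x a
  rho_der : ∀ (x : L) (a b : A), ρ x (mulA a b) = mulA (ρ x a) b + mulA a (ρ x b)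
  rho_br : ∀ (x y : L) (a : A), ρ (br x y) a = ρ x (ρ y a) + ρ y (ρ x a)
  rho_sq : ∀ x ∈ odL, ∀ a : A, ρ (sq x) a = ρ x (ρ x a)
  rho_grade_ee : ∀ x ∈ evL, ∀ a ∈ evA, ρ x a ∈ evA
  rho_grade_eo : ∀ x ∈ evL, ∀ a ∈ odA, ρ x a ∈ odA
  rho_grade_oe : ∀ x ∈ odL, ∀ a ∈ evA, ρ x a ∈ odA
  rho_grade_oo : ∀ x ∈ odL, ∀ a ∈ odA, ρ x a ∈ evA
  rho_act : ∀ (a : A) (x : L) (b : A), ρ (act a x) b = mulA a (ρ x b)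
  br_act : ∀ (x y : L) (a : A), br x (act a y) = act a (br x y) + act (ρ x a) y
  sq_act_ev : ∀ a ∈ evA, ∀ x ∈ odL,
    sq (act a x) = act (mulA a a) (sq x) + act (ρ (act a x) a) x
  sq_act_od : ∀ a ∈ odA, ∀ x ∈ evL,
    sq (act a x) = act (ρ (act a x) a) x

/-- For a Lie-Rinehart superalgebra `(A, L, ρ)` in characteristic 2,
the graded space `A ⊕ L` is a Lie superalgebra with bracket
`[a + x, b + y] = ρ_x(b) + ρ_y(a) + [x, y]` and squaring
`s(a + x) = ρ_x(a) + s(x)`. -/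
theorem lieRinehart_direct_sum_isLieSuper
    {K A L : Type*} [Field K] [CharP K 2]
    [AddCommGroup A] [Module K A] [AddCommGroup L] [Module K L]
    (evA odA : Submodule K A) (mulA : A → A → A)
    (evL odL : Submodule K L) (br : L → L → L) (sq : L → L)
    (act : A → L → L) (ρ : L → A → A)
    (hLR : IsLieRinehart2 K evA odA mulA evL odL br sq act ρ) :
    IsLieSuper2 K (evA.prod evL) (odA.prod odL)
      (fun p q => (ρ p.2 q.1 + ρ q.2 p.1, br p.2 q.2))
      (fun p => (ρ p.2 p.1, sq p.2)) := by
  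
  have h2 : ∀ {M : Type _} [inst : AddCommGroup M] [Module K M] (m : M), m + m = 0 := by
    intro M _ _ m
    have : ((2 : K) : K) • m = 0 := by
      rw [show (2 : K) = 0 from CharP.cast_eq_zero K 2 ▸ by norm_num, zero_smul]
    calc m + m = (2 : K) • m := (two_smul K m).symm
      _ = 0 := this
  obtain ⟨cA, lL, act_add_left, act_add_right, act_smul_left, act_smul_right, act_mulA,
    agee, ageo, agoe, agoo, rho_add, rho_smul, rho_arg_add, rho_arg_smul, rho_der,
    rho_br, rho_sq, rgee, rgeo, rgoe, rgoo, rho_act, br_act, sq_act_ev, sq_act_od⟩ := hLR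
  constructor
  · -- compl
    constructor
    · rw [Submodule.disjoint_def]
      rintro ⟨a, x⟩ ⟨ha1, hx1⟩ ⟨ha2, hx2⟩
      exact Prod.ext ((Submodule.disjoint_def.mp cA.compl.disjoint) a ha1 ha2)
        ((Submodule.disjoint_def.mp lL.compl.disjoint) x hx1 hx2)
    · rw [codisjoint_iff, eq_top_iff]
      rintro ⟨a, x⟩ -
      have ha : a ∈ evA ⊔ odA := by rw [cA.compl.sup_eq_top]; trivial
      have hx : x ∈ evL ⊔ odL := by rw [lL.compl.sup_eq_top]; trivial
      obtain ⟨a0, ha0, a1, ha1, rfl⟩ := Submodule.mem_sup.mp ha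
      obtain ⟨x0, hx0, x1, hx1, rfl⟩ := Submodule.mem_sup.mp hx
      have : ((a0, x0) : A × L) + (a1, x1) = (a0 + a1, x0 + x1) := rfl
      rw [← this]
      exact Submodule.add_mem _
        (Submodule.mem_sup_left ⟨ha0, hx0⟩) (Submodule.mem_sup_right ⟨ha1, hx1⟩)
  · intro x y z
    refine Prod.ext ?_ ?_
    · simp only [Prod.fst_add, Prod.snd_add, rho_add, rho_arg_add]; abel
    · exact lL.add_left _ _ _
  · intro c x y
    refine Prod.ext ?_ ?_
    · simp only [Prod.smul_fst, Prod.smul_snd, rho_smul, rho_arg_smul, smul_add]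
    · exact lL.smul_left _ _ _
  · intro x y
    exact Prod.ext (add_comm _ _) (lL.symm _ _)
  · rintro ⟨a, x⟩ ⟨-, hx⟩
    exact Prod.ext (h2 _) (lL.alt_ev x hx)
  · rintro ⟨a, x⟩ ⟨ha, hx⟩ ⟨b, y⟩ ⟨hb, hy⟩
    exact ⟨Submodule.add_mem _ (rgee x hx b hb) (rgee y hy a ha), lL.grade_ee x hx y hy⟩
  · rintro ⟨a, x⟩ ⟨ha, hx⟩ ⟨b, y⟩ ⟨hb, hy⟩
    exact ⟨Submodule.add_mem _ (rgeo x hx b hb) (rgoe y hy a ha), lL.grade_eo x hx y hy⟩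
  · rintro ⟨a, x⟩ ⟨ha, hx⟩ ⟨b, y⟩ ⟨hb, hy⟩
    exact ⟨Submodule.add_mem _ (rgoo x hx b hb) (rgoo y hy a ha), lL.grade_oo x hx y hy⟩
  · rintro ⟨a, x⟩ ⟨ha, hx⟩ ⟨b, y⟩ ⟨hb, hy⟩ ⟨c, z⟩
    refine Prod.ext ?_ ?_
    · simp only [Prod.fst_add, rho_br, rho_arg_add]
      have e1 := h2 (ρ y (ρ z a))
      have e2 := h2 (ρ x (ρ z b))
      rw [← sub_eq_zero]
      abel_nf
      abel_nf at e1 e2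
      simp [neg_smul, e1, e2]
    · exact lL.jacobi_ev x hx y hy z
  · rintro ⟨a, x⟩ ⟨ha, hx⟩
    exact ⟨rgoo x hx a ha, lL.sq_mem x hx⟩
  · rintro c ⟨a, x⟩ ⟨ha, hx⟩
    refine Prod.ext ?_ (lL.sq_smul c x hx)
    simp only [Prod.smul_fst, Prod.smul_snd, rho_smul, rho_arg_smul, smul_smul]
  · rintro ⟨a, x⟩ ⟨ha, hx⟩ ⟨b, y⟩ ⟨hb, hy⟩
    refine Prod.ext ?_ (lL.sq_add x hx y hy)
    simp only [Prod.fst_add, Prod.snd_add, rho_add, rho_arg_add]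
    abel
  · rintro ⟨a, x⟩ ⟨ha, hx⟩ ⟨c, z⟩
    refine Prod.ext ?_ (lL.sq_jacobi x hx z)
    simp only [rho_sq x hx, rho_br, rho_arg_add]
    have e := h2 (ρ x (ρ z a))
    rw [← sub_eq_zero]
    abel_nf
    abel_nf at e
    simp [neg_smul, e]
end

section
/- Let (A, L, ρ) be a Lie-Rinehart superalgebra over a field K of characteristic 2, and let U(A, L, ρ) be its universal enveloping algebra with canonical maps i_A : A → U(A,L,ρ) and i_L : L → U(A,L,ρ). Then for every triple (B, r_A, r_L), where B is an associative superalgebra over K, r_A : A → B is an even morphism of associative superalgebras, and r_L : L → B is an even morphism of Lie superalgebras (B being a Lie superalgebra via the commutator and the squaring b ↦ b²) satisfying r_L(ax) = r_A(a)r_L(x) and r_L(x)r_A(a) = r_A(a)r_L(x) + r_A(ρ_x(a)) for all a ∈ A and x ∈ L, there exists a unique even morphism of associative superalgebras f : U(A,L,ρ) → B such that f ∘ i_A = r_A and f ∘ i_L = r_L. -/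
section EnvelopingConstruction
variable (K : Type*) [Field K] {A L : Type*}
  [AddCommGroup A] [Module K A] [AddCommGroup L] [Module K L]

/-- The bracket on the Lie superalgebra `A ⊕ L` attached to Lie-Rinehart data. -/
def alBr (br : L → L → L) (ρ : L → A → A) (p q : A × L) : A × L :=
  (ρ p.2 q.1 + ρ q.2 p.1, br p.2 q.2)

/-- The squaring on the Lie superalgebra `A ⊕ L` attached to Lie-Rinehart data. -/
def alSq (sq : L → L) (ρ : L → A → A) (p : A × L) : A × L :=
  (ρ p.2 p.1, sq p.2)

/-- The relations defining the enveloping algebra `U(A ⊕ L)` of the Lie superalgebra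
`A ⊕ L` in characteristic 2: `u⊗v + v⊗u + [u,v] = 0` and, for odd `w`,
`w⊗w + s(w) = 0`. -/
inductive EnvRel (odA : Submodule K A) (odL : Submodule K L)
    (br : L → L → L) (sq : L → L) (ρ : L → A → A) :
    TensorAlgebra K (A × L) → TensorAlgebra K (A × L) → Prop
  | comm_rel (u v : A × L) :
      EnvRel odA odL br sq ρ
        (TensorAlgebra.ι K u * TensorAlgebra.ι K v +
          TensorAlgebra.ι K v * TensorAlgebra.ι K u +
          TensorAlgebra.ι K (alBr br ρ u v)) 0
  | sq_rel (w : A × L) (hw : w ∈ odA.prod odL) :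
      EnvRel odA odL br sq ρ
        (TensorAlgebra.ι K w * TensorAlgebra.ι K w +
          TensorAlgebra.ι K (alSq sq ρ w)) 0

variable (odA : Submodule K A) (odL : Submodule K L)
  (mulA : A → A → A) (br : L → L → L) (sq : L → L) (act : A → L → L) (ρ : L → A → A)

/-- The canonical map `A ⊕ L → U(A ⊕ L)`. -/
noncomputable def envMap : A × L → RingQuot (EnvRel K odA odL br sq ρ) :=
  fun u => RingQuot.mkAlgHom K (EnvRel K odA odL br sq ρ) (TensorAlgebra.ι K u)

/-- The subalgebra `Ū(A ⊕ L)` of `U(A ⊕ L)` generated by the image of `A ⊕ L`. -/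
noncomputable def envBar : Subalgebra K (RingQuot (EnvRel K odA odL br sq ρ)) :=
  Algebra.adjoin K (Set.range (envMap K odA odL br sq ρ))

/-- The canonical map `A ⊕ L → Ū(A ⊕ L)`. -/
noncomputable def envMapBar : A × L → ↥(envBar K odA odL br sq ρ) :=
  fun u => ⟨envMap K odA odL br sq ρ u, Algebra.subset_adjoin ⟨u, rfl⟩⟩

/-- The relations generating the ideal `J`: `i(a)·i(b + x) + i(ab + ax) = 0`. -/
inductive JRel : ↥(envBar K odA odL br sq ρ) → ↥(envBar K odA odL br sq ρ) → Prop
  | rel (a b : A) (x : L) :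
      JRel (envMapBar K odA odL br sq ρ (a, 0) * envMapBar K odA odL br sq ρ (b, x) +
            envMapBar K odA odL br sq ρ (mulA a b, act a x)) 0

/-- The universal enveloping algebra `U(A, L, ρ)` of a Lie-Rinehart superalgebra in
characteristic 2. -/
noncomputable def LREnv : Type _ :=
  RingQuot (JRel K odA odL mulA br sq act ρ)

noncomputable instance : Ring (LREnv K odA odL mulA br sq act ρ) := by
  unfold LREnv; exact RingQuot.instRing (JRel K odA odL mulA br sq act ρ)

noncomputable instance : Algebra K (LREnv K odA odL mulA br sq act ρ) := by
  unfold LREnv; exact RingQuot.instAlgebra (JRel K odA odL mulA br sq act ρ)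

/-- The canonical map `i_A : A → U(A, L, ρ)`. -/
noncomputable def lrIA : A → LREnv K odA odL mulA br sq act ρ :=
  fun a => RingQuot.mkAlgHom K (JRel K odA odL mulA br sq act ρ)
    (envMapBar K odA odL br sq ρ (a, 0))

/-- The canonical map `i_L : L → U(A, L, ρ)`. -/
noncomputable def lrIL : L → LREnv K odA odL mulA br sq act ρ :=
  fun x => RingQuot.mkAlgHom K (JRel K odA odL mulA br sq act ρ)
    (envMapBar K odA odL br sq ρ (0, x))

end EnvelopingConstruction

set_option maxHeartbeats 1600000 in
set_option synthInstance.maxHeartbeats 400000 in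
/-- The universal property of the universal enveloping algebra
`U(A, L, ρ)` of a Lie-Rinehart superalgebra in characteristic 2: for every
associative superalgebra `B`, every even associative superalgebra morphism
`r_A : A → B` and every even Lie superalgebra morphism `r_L : L → B` (with the
commutator bracket and squaring `b ↦ b²` on `B`) satisfying
`r_L(ax) = r_A(a) r_L(x)` and `r_L(x) r_A(a) = r_A(a) r_L(x) + r_A(ρ_x(a))`, there
is a unique morphism of associative algebras `f : U(A, L, ρ) → B` with
`f ∘ i_A = r_A` and `f ∘ i_L = r_L`. -/
theorem lieRinehart_enveloping_universal_property
    {K A L : Type*} [Field K] [CharP K 2]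
    [AddCommGroup A] [Module K A] [AddCommGroup L] [Module K L]
    (evA odA : Submodule K A) (mulA : A → A → A)
    (evL odL : Submodule K L) (br : L → L → L) (sq : L → L)
    (act : A → L → L) (ρ : L → A → A)
    (hLR : IsLieRinehart2 K evA odA mulA evL odL br sq act ρ)
    (B : Type*) [Ring B] [Algebra K B]
    (evB odB : Submodule K B) (hBcompl : IsCompl evB odB)
    (hB_ee : ∀ b ∈ evB, ∀ b' ∈ evB, b * b' ∈ evB)
    (hB_eo : ∀ b ∈ evB, ∀ b' ∈ odB, b * b' ∈ odB)
    (hB_oe : ∀ b ∈ odB, ∀ b' ∈ evB, b * b' ∈ odB)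
    (hB_oo : ∀ b ∈ odB, ∀ b' ∈ odB, b * b' ∈ evB)
    (rA : A →ₗ[K] B) (rL : L →ₗ[K] B)
    (hrA_mul : ∀ a b : A, rA (mulA a b) = rA a * rA b)
    (hrA_ev : ∀ a ∈ evA, rA a ∈ evB) (hrA_od : ∀ a ∈ odA, rA a ∈ odB)
    (hrL_br : ∀ x y : L, rL (br x y) = rL x * rL y + rL y * rL x)
    (hrL_sq : ∀ x ∈ odL, rL (sq x) = rL x * rL x)
    (hrL_ev : ∀ x ∈ evL, rL x ∈ evB) (hrL_od : ∀ x ∈ odL, rL x ∈ odB)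
    (hcomp1 : ∀ (a : A) (x : L), rL (act a x) = rA a * rL x)
    (hcomp2 : ∀ (x : L) (a : A), rL x * rA a = rA a * rL x + rA (ρ x a)) :
    ∃! f : LREnv K odA odL mulA br sq act ρ →ₐ[K] B,
      (∀ a : A, f (lrIA K odA odL mulA br sq act ρ a) = rA a) ∧
      (∀ x : L, f (lrIL K odA odL mulA br sq act ρ x) = rL x) := by
  classical
  have two0 : ∀ b : B, b + b = 0 := by
    intro b
    have : ((2 : K)) • b = 0 := by
      rw [show (2 : K) = 0 from CharP.cast_eq_zero K 2, zero_smul]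
    rwa [show ((2:K) • b) = b + b by rw [show (2:K) = 1 + 1 by norm_num, add_smul, one_smul]]
      at this
  -- the linear map g : A × L → B
  set g : A × L →ₗ[K] B :=
    rA.comp (LinearMap.fst K A L) + rL.comp (LinearMap.snd K A L) with hg
  have hgdef : ∀ u : A × L, g u = rA u.1 + rL u.2 := fun u => rfl
  -- lift to the tensor algebra
  set φ0 : TensorAlgebra K (A × L) →ₐ[K] B := TensorAlgebra.lift K g with hφ0def
  have hφ0 : ∀ u : A × L, φ0 (TensorAlgebra.ι K u) = rA u.1 + rL u.2 := by
    intro u; rw [hφ0def, TensorAlgebra.lift_ι_apply]; rfl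
  -- φ0 respects the enveloping relations
  have hrel : ∀ ⦃x y : TensorAlgebra K (A × L)⦄,
      EnvRel K odA odL br sq ρ x y → φ0 x = φ0 y := by
    intro x y h
    induction h with
    | comm_rel u v =>
      obtain ⟨a, x⟩ := u; obtain ⟨b, y⟩ := v
      simp only [map_add, map_mul, map_zero, hφ0, alBr]
      have h1 : rL x * rA b = rA b * rL x + rA (ρ x b) := hcomp2 x b
      have h2 : rL y * rA a = rA a * rL y + rA (ρ y a) := hcomp2 y a
      have h3 : rL x * rL y + rL y * rL x = rL (br x y) := (hrL_br x y).symm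
      have h4 : rA b * rA a = rA a * rA b := by
        rw [← hrA_mul, ← hrA_mul, hLR.commA.comm]
      rw [add_mul, mul_add, mul_add, add_mul, mul_add, mul_add, h1, h2, h4]
      rw [← h3]
      abel_nf
      simp only [two_nsmul, two_zsmul, two0]
    | sq_rel w hw =>
      obtain ⟨a, x⟩ := w
      obtain ⟨ha, hx⟩ := hw
      simp only [map_add, map_mul, map_zero, hφ0, alSq]
      have h0 : rA a * rA a = 0 := by
        rw [← hrA_mul, hLR.commA.alt_od a ha, map_zero]
      have h1 : rL x * rA a = rA a * rL x + rA (ρ x a) := hcomp2 x a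
      have h2 : rL x * rL x = rL (sq x) := (hrL_sq x hx).symm
      rw [add_mul, mul_add, mul_add, h0, h1, h2]
      abel_nf
      simp only [two_nsmul, two_zsmul, two0]
  set φ1 : RingQuot (EnvRel K odA odL br sq ρ) →ₐ[K] B :=
    RingQuot.liftAlgHom K ⟨φ0, hrel⟩ with hφ1def
  have hφ1 : ∀ u : A × L, φ1 (envMap K odA odL br sq ρ u) = rA u.1 + rL u.2 := by
    intro u
    rw [hφ1def, envMap, RingQuot.liftAlgHom_mkAlgHom_apply, hφ0]
  set φ2 : ↥(envBar K odA odL br sq ρ) →ₐ[K] B :=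
    φ1.comp (envBar K odA odL br sq ρ).val with hφ2def
  have hφ2 : ∀ u : A × L, φ2 (envMapBar K odA odL br sq ρ u) = rA u.1 + rL u.2 := by
    intro u; rw [hφ2def]; exact hφ1 u
  have hJ : ∀ ⦃x y : ↥(envBar K odA odL br sq ρ)⦄,
      JRel K odA odL mulA br sq act ρ x y → φ2 x = φ2 y := by
    intro x y h
    induction h with
    | rel a b x =>
      simp only [map_add, map_mul, map_zero, hφ2]
      rw [hrA_mul, hcomp1, add_zero, mul_add]
      exact two0 _
  have e1 : ∀ a : A, RingQuot.liftAlgHom K ⟨φ2, hJ⟩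
      (lrIA K odA odL mulA br sq act ρ a) = rA a := by
    intro a
    show RingQuot.liftAlgHom K ⟨φ2, hJ⟩
      (RingQuot.mkAlgHom K _ (envMapBar K odA odL br sq ρ (a, 0))) = rA a
    rw [RingQuot.liftAlgHom_mkAlgHom_apply, hφ2]
    simp
  have e2 : ∀ x : L, RingQuot.liftAlgHom K ⟨φ2, hJ⟩
      (lrIL K odA odL mulA br sq act ρ x) = rL x := by
    intro x
    show RingQuot.liftAlgHom K ⟨φ2, hJ⟩
      (RingQuot.mkAlgHom K _ (envMapBar K odA odL br sq ρ (0, x))) = rL x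
    rw [RingQuot.liftAlgHom_mkAlgHom_apply, hφ2]
    simp
  refine ⟨RingQuot.liftAlgHom K ⟨φ2, hJ⟩, ⟨e1, e2⟩, ?_⟩
  rintro f' ⟨hfA, hfL⟩
  apply RingQuot.ringQuot_ext'
  apply AlgHom.ext
  intro u
  simp only [AlgHom.comp_apply]
  -- key : envMapBar (a, x) decomposes
  have hsplit : ∀ (a : A) (x : L),
      envMapBar K odA odL br sq ρ (a, x) =
      envMapBar K odA odL br sq ρ (a, 0) + envMapBar K odA odL br sq ρ (0, x) := by
    intro a x
    apply Subtype.ext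
    show envMap K odA odL br sq ρ (a, x) =
      envMap K odA odL br sq ρ (a, 0) + envMap K odA odL br sq ρ (0, x)
    show RingQuot.mkAlgHom K (EnvRel K odA odL br sq ρ) (TensorAlgebra.ι K (a, x)) =
      RingQuot.mkAlgHom K (EnvRel K odA odL br sq ρ) (TensorAlgebra.ι K (a, 0)) +
      RingQuot.mkAlgHom K (EnvRel K odA odL br sq ρ) (TensorAlgebra.ι K (0, x))
    rw [← map_add, ← map_add]
    congr 1
    rw [show ((a, x) : A × L) = (a, 0) + (0, x) by simp]
  have hdecomp : ∀ (a : A) (x : L),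
      RingQuot.mkAlgHom K (JRel K odA odL mulA br sq act ρ)
        (envMapBar K odA odL br sq ρ (a, x)) =
      lrIA K odA odL mulA br sq act ρ a + lrIL K odA odL mulA br sq act ρ x := by
    intro a x
    rw [hsplit, map_add]
    rfl
  have key : ∀ u : ↥(envBar K odA odL br sq ρ),
      f' (RingQuot.mkAlgHom K (JRel K odA odL mulA br sq act ρ) u) =
      RingQuot.liftAlgHom K ⟨φ2, hJ⟩
        (RingQuot.mkAlgHom K (JRel K odA odL mulA br sq act ρ) u) := by
    intro u
    have adjoin_induction' : ∀ {p : ↥(envBar K odA odL br sq ρ) → Prop},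
        (∀ x (h : x ∈ Set.range (envMap K odA odL br sq ρ)), p ⟨x, Algebra.subset_adjoin h⟩) →
        (∀ r, p (algebraMap K _ r)) → (∀ x y, p x → p y → p (x + y)) →
        (∀ x y, p x → p y → p (x * y)) → ∀ x, p x := by
      intro p h1 h2 h3 h4 x
      obtain ⟨x, hx⟩ := x
      exact Algebra.adjoin_induction (s := Set.range (envMap K odA odL br sq ρ))
        (p := fun y hy => p ⟨y, hy⟩) (fun y hy => h1 y hy) (fun r => h2 r)
        (fun y z _ _ ihy ihz => h3 _ _ ihy ihz) (fun y z _ _ ihy ihz => h4 _ _ ihy ihz) hx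
    refine adjoin_induction' (p := fun u => f' (RingQuot.mkAlgHom K
        (JRel K odA odL mulA br sq act ρ) u) = RingQuot.liftAlgHom K ⟨φ2, hJ⟩
          (RingQuot.mkAlgHom K (JRel K odA odL mulA br sq act ρ) u)) (fun v hv => ?_) (fun r => ?_)
      (fun v w hv hw => ?_) (fun v w hv hw => ?_) u
    · obtain ⟨⟨a, x⟩, rfl⟩ := hv
      show f' (RingQuot.mkAlgHom K (JRel K odA odL mulA br sq act ρ)
          (envMapBar K odA odL br sq ρ (a, x))) =
        RingQuot.liftAlgHom K ⟨φ2, hJ⟩ (RingQuot.mkAlgHom K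
          (JRel K odA odL mulA br sq act ρ) (envMapBar K odA odL br sq ρ (a, x)))
      rw [hdecomp]
      exact (map_add f' _ _).trans (by rw [hfA, hfL, ← e1, ← e2]; exact (map_add _ _ _).symm)
    · show f' (RingQuot.mkAlgHom K (JRel K odA odL mulA br sq act ρ)
          (algebraMap K ↥(envBar K odA odL br sq ρ) r)) =
        RingQuot.liftAlgHom K ⟨φ2, hJ⟩ (RingQuot.mkAlgHom K
          (JRel K odA odL mulA br sq act ρ)
          (algebraMap K ↥(envBar K odA odL br sq ρ) r))
      rw [AlgHom.commutes, AlgHom.commutes]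
      exact f'.commutes r
    · show f' (RingQuot.mkAlgHom K (JRel K odA odL mulA br sq act ρ) (v + w)) =
        RingQuot.liftAlgHom K ⟨φ2, hJ⟩
          (RingQuot.mkAlgHom K (JRel K odA odL mulA br sq act ρ) (v + w))
      rw [map_add, map_add]
      exact (map_add f' _ _).trans (by rw [hv, hw])
    · show f' (RingQuot.mkAlgHom K (JRel K odA odL mulA br sq act ρ) (v * w)) =
        RingQuot.liftAlgHom K ⟨φ2, hJ⟩
          (RingQuot.mkAlgHom K (JRel K odA odL mulA br sq act ρ) (v * w))
      rw [map_mul, map_mul]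
      exact (map_mul f' _ _).trans (by rw [hv, hw])
  exact key u
end

section
/- Let (P, {-,-}, s) be a Poisson superalgebra over a field K of characteristic 2. Define π, γ : P → End(P) by π(x)(v) = xv and γ(x)(v) = {x,v}. Then (P, π, γ) is a representation of P on itself; in particular, for all x ∈ P₁ and y ∈ P₀ one has y{x, xv} = xy{x, v} for all even v ∈ P₀, and y²{x, w} = y{x, yw} + xy{y, w} + {y, xyw} for all odd w ∈ P₁. -/
/-- A Poisson superalgebra in characteristic 2: a Lie superalgebra together with an
associative supercommutative product satisfying the Leibniz rule and the compatibility
of the squaring with the product. -/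
structure IsPoisson2 (K : Type*) [Field K] {P : Type*} [AddCommGroup P] [Module K P]
    (ev od : Submodule K P) (mul br : P → P → P) (sq : P → P) : Prop where
  commAlg : IsSuperComm2 K ev od mul
  lieAlg : IsLieSuper2 K ev od br sq
  leibniz : ∀ x y z : P, br (mul x y) z = mul x (br y z) + mul (br x z) y
  sq_mul : ∀ x ∈ ev, ∀ y ∈ od,
    sq (mul x y) = mul (mul x x) (sq y) + mul (mul x y) (br x y)
/-- A representation of a Poisson superalgebra `(P, mul, br, sq)` in characteristic 2
on a graded vector space `V`: a pair of even bilinear-type maps `π, γ`, with `π` a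
morphism of associative superalgebras, `γ` a morphism of Lie superalgebras, subject to
the four compatibility conditions. -/
structure IsPoissonRep2 (K : Type*) [Field K] {P V : Type*}
    [AddCommGroup P] [Module K P] [AddCommGroup V] [Module K V]
    (evP odP : Submodule K P) (mul br : P → P → P) (sq : P → P)
    (evV odV : Submodule K V) (π γ : P → V → V) : Prop where
  π_add_left : ∀ (x y : P) (v : V), π (x + y) v = π x v + π y v
  π_smul_left : ∀ (c : K) (x : P) (v : V), π (c • x) v = c • π x v
  π_add_right : ∀ (x : P) (v w : V), π x (v + w) = π x v + π x w
  π_smul_right : ∀ (x : P) (c : K) (v : V), π x (c • v) = c • π x v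
  γ_add_left : ∀ (x y : P) (v : V), γ (x + y) v = γ x v + γ y v
  γ_smul_left : ∀ (c : K) (x : P) (v : V), γ (c • x) v = c • γ x v
  γ_add_right : ∀ (x : P) (v w : V), γ x (v + w) = γ x v + γ x w
  γ_smul_right : ∀ (x : P) (c : K) (v : V), γ x (c • v) = c • γ x v
  π_even_ee : ∀ x ∈ evP, ∀ v ∈ evV, π x v ∈ evV
  π_even_eo : ∀ x ∈ evP, ∀ v ∈ odV, π x v ∈ odV
  π_even_oe : ∀ x ∈ odP, ∀ v ∈ evV, π x v ∈ odV
  π_even_oo : ∀ x ∈ odP, ∀ v ∈ odV, π x v ∈ evV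
  γ_even_ee : ∀ x ∈ evP, ∀ v ∈ evV, γ x v ∈ evV
  γ_even_eo : ∀ x ∈ evP, ∀ v ∈ odV, γ x v ∈ odV
  γ_even_oe : ∀ x ∈ odP, ∀ v ∈ evV, γ x v ∈ odV
  γ_even_oo : ∀ x ∈ odP, ∀ v ∈ odV, γ x v ∈ evV
  π_mul : ∀ (x y : P) (v : V), π (mul x y) v = π x (π y v)
  γ_br : ∀ (x y : P) (v : V), γ (br x y) v = γ x (γ y v) + γ y (γ x v)
  γ_sq : ∀ x ∈ odP, ∀ v : V, γ (sq x) v = γ x (γ x v)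
  compat_mul : ∀ (x y : P) (v : V), γ (mul x y) v = π x (γ y v) + π y (γ x v)
  compat_br : ∀ (x y : P) (v : V), π (br x y) v = π x (γ y v) + γ y (π x v)
  compat_odd_ev : ∀ x ∈ odP, ∀ y ∈ evP, ∀ v ∈ evV,
    π y (γ x (π x v)) = π x (π y (γ x v))
  compat_odd_od : ∀ x ∈ odP, ∀ y ∈ evP, ∀ w ∈ odV,
    π y (π y (γ x w)) = π y (γ x (π y w)) + π x (π y (γ y w)) + γ y (π x (π y w))

/-- For a Poisson superalgebra `P` in characteristic 2, the maps
`π(x)(v) = xv` and `γ(x)(v) = {x,v}` define the adjoint representation of `P` on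
itself; in particular `y{x, xv} = x(y{x,v})` for `x` odd, `y, v` even, and
`y(y{x,w}) = y{x, yw} + x(y{y,w}) + {y, x(yw)}`... (the two characteristic-2
compatibility conditions hold). -/
theorem adjoint_is_representation
    {K P : Type*} [Field K] [CharP K 2] [AddCommGroup P] [Module K P]
    (ev od : Submodule K P) (mul br : P → P → P) (sq : P → P)
    (hP : IsPoisson2 K ev od mul br sq) :
    IsPoissonRep2 K ev od mul br sq ev od
      (fun x v => mul x v) (fun x v => br x v) ∧
    (∀ x ∈ od, ∀ y ∈ ev, ∀ v ∈ ev,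
      mul y (br x (mul x v)) = mul x (mul y (br x v))) ∧
    (∀ x ∈ od, ∀ y ∈ ev, ∀ w ∈ od,
      mul y (mul y (br x w)) =
        mul y (br x (mul y w)) + mul x (mul y (br y w)) + br y (mul x (mul y w))) := by
  obtain ⟨hC, hL, hLeib, _hsqmul⟩ := hP
  -- characteristic 2 facts
  have h2 : ∀ p : P, p + p = 0 := fun p => by
    have h : ((2 : K)) • p = p + p := two_smul K p
    rw [(by exact_mod_cast CharP.cast_eq_zero K 2 : (2 : K) = 0), zero_smul] at h
    exact h.symm
  have hz : ∀ p : P, (2 : ℤ) • p = 0 := fun p => by rw [two_zsmul]; exact h2 p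
  have eqc : ∀ a b : P, a + b = 0 → a = b := fun a b hab => by
    calc a = a + 0 := (add_zero a).symm
    _ = a + (b + b) := by rw [h2]
    _ = (a + b) + b := (add_assoc _ _ _).symm
    _ = 0 + b := by rw [hab]
    _ = b := zero_add b
  -- bilinearity on the right
  have brad : ∀ x y z : P, br x (y + z) = br x y + br x z := fun x y z => by
    rw [hL.symm x (y + z), hL.add_left, hL.symm y x, hL.symm z x]
  have brsm : ∀ (x : P) (c : K) (y : P), br x (c • y) = c • br x y := fun x c y => by
    rw [hL.symm x (c • y), hL.smul_left, hL.symm y x]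
  have mulad : ∀ x y z : P, mul x (y + z) = mul x y + mul x z := fun x y z => by
    rw [hC.comm x (y + z), hC.add_left, hC.comm y x, hC.comm z x]
  have mulsm : ∀ (x : P) (c : K) (y : P), mul x (c • y) = c • mul x y := fun x c y => by
    rw [hC.comm x (c • y), hC.smul_left, hC.comm y x]
  have mul0l : ∀ v : P, mul 0 v = 0 := fun v => by
    have h := hC.smul_left 0 0 v
    simpa using h
  -- br x x = 0 for odd x
  have br_self_od : ∀ x ∈ od, br x x = 0 := fun x hx => by
    have h := hL.sq_add x hx x hx
    rw [h2 x] at h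
    have h0 : sq (0 : P) = 0 := by
      have := hL.sq_smul 0 x hx
      simpa using this
    rw [h0, h2 (sq x)] at h
    simpa using h.symm
  have br_xxv : ∀ x ∈ od, ∀ v : P, br x (mul x v) = mul x (br x v) := fun x hx v => by
    rw [hL.symm x (mul x v), hLeib x v x, br_self_od x hx, mul0l, add_zero, hL.symm v x]
  -- decomposition
  have decomp : ∀ p : P, ∃ a ∈ ev, ∃ b ∈ od, a + b = p := fun p => by
    have hp : p ∈ ev ⊔ od := by rw [hL.compl.sup_eq_top]; trivial
    exact Submodule.mem_sup.mp hp
  -- jacobi for two odd elements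
  have jac_oo : ∀ x ∈ od, ∀ y ∈ od, ∀ z : P,
      br (br x y) z = br x (br y z) + br y (br x z) := fun x hx y hy z => by
    have E1 : br (sq (x + y)) z = (br x (br x z) + br y (br y z)) + br (br x y) z := by
      rw [hL.sq_add x hx y hy, hL.add_left, hL.add_left, hL.sq_jacobi x hx,
        hL.sq_jacobi y hy]
    have E2 : br (sq (x + y)) z
        = (br x (br x z) + br y (br y z)) + (br x (br y z) + br y (br x z)) := by
      rw [hL.sq_jacobi (x + y) (od.add_mem hx hy), hL.add_left, hL.add_left x y z,
        brad x (br x z) (br y z), brad y (br x z) (br y z)]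
      abel
    exact add_left_cancel (E1.symm.trans E2)
  -- the symmetric Jacobiator
  have key1 : ∀ x ∈ ev, ∀ y ∈ ev, ∀ z : P,
      br x (br y z) + br y (br x z) + br z (br x y) = 0 := fun x hx y hy z => by
    rw [hL.symm z (br x y), ← hL.jacobi_ev x hx y hy z]
    exact h2 _
  have key2 : ∀ x ∈ od, ∀ y ∈ od, ∀ z : P,
      br x (br y z) + br y (br x z) + br z (br x y) = 0 := fun x hx y hy z => by
    rw [hL.symm z (br x y), ← jac_oo x hx y hy z]
    exact h2 _
  have swap12 : ∀ x y z : P,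
      br x (br y z) + br y (br x z) + br z (br x y)
        = br y (br x z) + br x (br y z) + br z (br y x) := fun x y z => by
    rw [hL.symm x y]; abel
  have swap23 : ∀ x y z : P,
      br x (br y z) + br y (br x z) + br z (br x y)
        = br x (br z y) + br z (br x y) + br y (br x z) := fun x y z => by
    rw [hL.symm y z]; abel
  have pureS : ∀ a b c : P, (a ∈ ev ∨ a ∈ od) → (b ∈ ev ∨ b ∈ od) → (c ∈ ev ∨ c ∈ od) →
      br a (br b c) + br b (br a c) + br c (br a b) = 0 := by
    intro a b c ha hb hc
    rcases ha with ha | ha <;> rcases hb with hb | hb <;> rcases hc with hc | hc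
    · exact key1 a ha b hb c
    · exact key1 a ha b hb c
    · rw [swap23]; exact key1 a ha c hc b
    · rw [swap12, swap23]; exact key2 b hb c hc a
    · rw [swap12, swap23]; exact key1 b hb c hc a
    · rw [swap23]; exact key2 a ha c hc b
    · exact key2 a ha b hb c
    · exact key2 a ha b hb c
  have addS1 : ∀ x x' y z : P,
      br (x + x') (br y z) + br y (br (x + x') z) + br z (br (x + x') y)
        = (br x (br y z) + br y (br x z) + br z (br x y))
          + (br x' (br y z) + br y (br x' z) + br z (br x' y)) := fun x x' y z => by
    rw [hL.add_left x x' (br y z), hL.add_left x x' z, hL.add_left x x' y,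
      brad y (br x z) (br x' z), brad z (br x y) (br x' y)]
    abel
  have lvl2 : ∀ b c : P, (b ∈ ev ∨ b ∈ od) → (c ∈ ev ∨ c ∈ od) → ∀ x : P,
      br x (br b c) + br b (br x c) + br c (br x b) = 0 := by
    intro b c hb hc x
    obtain ⟨a, ha, a', ha', h⟩ := decomp x
    rw [← h, addS1, pureS a b c (Or.inl ha) hb hc, pureS a' b c (Or.inr ha') hb hc,
      add_zero]
  have lvl3 : ∀ c : P, (c ∈ ev ∨ c ∈ od) → ∀ x y : P,
      br x (br y c) + br y (br x c) + br c (br x y) = 0 := by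
    intro c hc x y
    obtain ⟨b, hb, b', hb', h⟩ := decomp y
    rw [← h, swap12, addS1, swap12 b x c, swap12 b' x c,
      lvl2 b c (Or.inl hb) hc x, lvl2 b' c (Or.inr hb') hc x, add_zero]
  have sAny : ∀ x y z : P,
      br x (br y z) + br y (br x z) + br z (br x y) = 0 := by
    intro x y z
    obtain ⟨c, hc, c', hc', h⟩ := decomp z
    rw [← h, swap23, swap12, addS1, swap12 c x y, swap23 x c y,
      lvl3 c (Or.inl hc) x y, swap12 c' x y, swap23 x c' y,
      lvl3 c' (Or.inr hc') x y, add_zero]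
  -- full Jacobi identity
  have γbr : ∀ x y v : P, br (br x y) v = br x (br y v) + br y (br x v) := fun x y v => by
    rw [hL.symm (br x y) v]
    refine eqc _ _ ?_
    calc br v (br x y) + (br x (br y v) + br y (br x v))
        = br x (br y v) + br y (br x v) + br v (br x y) := by abel
    _ = 0 := sAny x y v
  -- compatibility of bracket with product
  have cbr : ∀ x y v : P, mul (br x y) v = mul x (br y v) + br y (mul x v) := by
    intro x y v
    refine eqc _ _ ?_
    rw [hL.symm y (mul x v), hLeib x v y, hL.symm y v]
    abel_nf
    simp [hz]
  -- first special compatibility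
  have comp1 : ∀ x ∈ od, ∀ y : P, ∀ v : P,
      mul y (br x (mul x v)) = mul x (mul y (br x v)) := fun x hx y v => by
    rw [br_xxv x hx v, ← hC.assoc, hC.comm y x, hC.assoc]
  -- second special compatibility
  have comp2 : ∀ x : P, ∀ y ∈ ev, ∀ w : P,
      mul y (mul y (br x w)) =
        mul y (br x (mul y w)) + mul x (mul y (br y w)) + br y (mul x (mul y w)) := by
    intro x y hy w
    have r1 : br x (mul y w) = mul y (br x w) + mul (br x y) w := by
      rw [hL.symm x (mul y w), hLeib y w x, hL.symm w x, hL.symm y x]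
    have r3 : br y (mul x (mul y w)) = mul x (mul y (br y w)) + mul (br x y) (mul y w) := by
      rw [hL.symm y (mul x (mul y w)), hLeib x (mul y w) y, hLeib y w y,
        hL.alt_ev y hy, mul0l, add_zero, hL.symm w y]
    have hM : mul (br x y) (mul y w) = mul y (mul (br x y) w) := by
      rw [← hC.assoc, hC.comm (br x y) y, hC.assoc]
    rw [r1, r3, mulad y (mul y (br x w)) (mul (br x y) w), hM]
    abel_nf
    simp [hz]
  refine ⟨?_, fun x hx y _ v _ => comp1 x hx y v, fun x _ y hy w _ => comp2 x y hy w⟩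
  exact
    { π_add_left := fun x y v => hC.add_left x y v
      π_smul_left := fun c x v => hC.smul_left c x v
      π_add_right := fun x v w => mulad x v w
      π_smul_right := fun x c v => mulsm x c v
      γ_add_left := fun x y v => hL.add_left x y v
      γ_smul_left := fun c x v => hL.smul_left c x v
      γ_add_right := fun x v w => brad x v w
      γ_smul_right := fun x c v => brsm x c v
      π_even_ee := fun x hx v hv => hC.grade_ee x hx v hv
      π_even_eo := fun x hx v hv => hC.grade_eo x hx v hv
      π_even_oe := fun x hx v hv => by rw [hC.comm]; exact hC.grade_eo v hv x hx
      π_even_oo := fun x hx v hv => hC.grade_oo x hx v hv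
      γ_even_ee := fun x hx v hv => hL.grade_ee x hx v hv
      γ_even_eo := fun x hx v hv => hL.grade_eo x hx v hv
      γ_even_oe := fun x hx v hv => by rw [hL.symm]; exact hL.grade_eo v hv x hx
      γ_even_oo := fun x hx v hv => hL.grade_oo x hx v hv
      π_mul := fun x y v => hC.assoc x y v
      γ_br := fun x y v => γbr x y v
      γ_sq := fun x hx v => hL.sq_jacobi x hx v
      compat_mul := fun x y v => by
        rw [hLeib x y v, hC.comm (br x v) y]
      compat_br := fun x y v => cbr x y v
      compat_odd_ev := fun x hx y _ v _ => comp1 x hx y v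
      compat_odd_od := fun x _ y hy w _ => comp2 x y hy w }
end

section
/- Let (P, {-,-}, s) be a Poisson superalgebra over a field K of characteristic 2 and let (P_k[[t]], μ_(k), ω_(k)) be a formal deformation of order k of P, with coefficients (μ_i, ω_i). Define Obs¹_{k+1}(x,y,z) = Σ_{i=1}^k ( μ_i(x, μ_{k+1-i}(y,z)) + μ_i(y, μ_{k+1-i}(z,x)) + μ_i(z, μ_{k+1-i}(x,y)) ) for x,y,z ∈ P, and Obs²_{k+1}(x,y) = Σ_{i=1}^k ( μ_i(y, ω_{k+1-i}(x)) + μ_i(x, μ_{k+1-i}(x,y)) ) for x ∈ P₁ and y ∈ P. Then (Obs¹_{k+1}, Obs²_{k+1}) is an even Poisson 3-cochain of P. -/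
section DeformationTheory
variable (K : Type*) [Field K] {P : Type*} [AddCommGroup P] [Module K P]

/-- A Poisson 2-cochain `(φ, ω)` of a Poisson superalgebra in characteristic 2,
written in curried form. -/
structure IsPoisson2Cochain2 (ev od : Submodule K P) (mul : P → P → P)
    (φ : P → P → P) (ω : P → P) : Prop where
  φ_add_left : ∀ x y z : P, φ (x + y) z = φ x z + φ y z
  φ_smul_left : ∀ (c : K) (x z : P), φ (c • x) z = c • φ x z
  φ_add_right : ∀ x y z : P, φ x (y + z) = φ x y + φ x z
  φ_smul_right : ∀ (c : K) (x z : P), φ x (c • z) = c • φ x z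
  φ_alt : ∀ x : P, φ x x = 0
  φ_der : ∀ x y z : P, φ (mul x y) z = mul x (φ y z) + mul y (φ x z)
  ω_smul : ∀ (c : K), ∀ x ∈ od, ω (c • x) = (c * c) • ω x
  ω_polar : ∀ x ∈ od, ∀ y ∈ od, ω (x + y) = ω x + ω y + φ x y
  ω_mul : ∀ x ∈ od, ∀ y ∈ ev,
    ω (mul x y) = mul (mul y y) (ω x) + mul (mul x y) (φ x y)

/-- A Poisson 3-cochain `(φ, ω)` of a Poisson superalgebra in characteristic 2,
written in curried form. -/
structure IsPoisson2Cochain3 (ev od : Submodule K P) (mul : P → P → P)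
    (φ : P → P → P → P) (ω : P → P → P) : Prop where
  φ_add1 : ∀ x x' y z : P, φ (x + x') y z = φ x y z + φ x' y z
  φ_smul1 : ∀ (c : K) (x y z : P), φ (c • x) y z = c • φ x y z
  φ_add2 : ∀ x y y' z : P, φ x (y + y') z = φ x y z + φ x y' z
  φ_smul2 : ∀ (c : K) (x y z : P), φ x (c • y) z = c • φ x y z
  φ_add3 : ∀ x y z z' : P, φ x y (z + z') = φ x y z + φ x y z'
  φ_smul3 : ∀ (c : K) (x y z : P), φ x y (c • z) = c • φ x y z
  φ_alt12 : ∀ x z : P, φ x x z = 0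
  φ_alt23 : ∀ x y : P, φ x y y = 0
  φ_alt13 : ∀ x y : P, φ x y x = 0
  φ_der : ∀ x y z w : P, φ (mul x y) z w = mul x (φ y z w) + mul y (φ x z w)
  ω_smul : ∀ (c : K), ∀ x ∈ od, ∀ z : P, ω (c • x) z = (c * c) • ω x z
  ω_polar : ∀ x ∈ od, ∀ y ∈ od, ∀ z : P, ω (x + y) z = ω x z + ω y z + φ x y z
  ω_add2 : ∀ x z z' : P, ω x (z + z') = ω x z + ω x z'
  ω_smul2 : ∀ (x : P) (c : K) (z : P), ω x (c • z) = c • ω x z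
  ω_mul : ∀ x ∈ od, ∀ y ∈ ev, ∀ z : P,
    ω (mul x y) z = mul (mul y y) (ω x z) + mul (mul x y) (φ x y z)
  ω_der2 : ∀ x z z' : P, ω x (mul z z') = mul z (ω x z') + mul z' (ω x z)

/-- `pt ev od false = ev` and `pt ev od true = od`: the homogeneous component of a
given parity. -/
def pt (ev od : Submodule K P) : Bool → Submodule K P := fun b => bif b then od else ev

/-- A Poisson 2-cochain is even if `φ` preserves the grading (then `ω` takes odd
elements to even ones). -/
def Cochain2Even (ev od : Submodule K P) (φ : P → P → P) (ω : P → P) : Prop :=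
  (∀ (b1 b2 : Bool), ∀ x ∈ pt K ev od b1, ∀ y ∈ pt K ev od b2,
    φ x y ∈ pt K ev od (xor b1 b2)) ∧
  (∀ x ∈ od, ω x ∈ ev)

/-- A Poisson 3-cochain is even if `φ` preserves the grading. -/
def Cochain3Even (ev od : Submodule K P) (φ : P → P → P → P) (ω : P → P → P) : Prop :=
  (∀ (b1 b2 b3 : Bool), ∀ x ∈ pt K ev od b1, ∀ y ∈ pt K ev od b2, ∀ z ∈ pt K ev od b3,
    φ x y z ∈ pt K ev od (xor b1 (xor b2 b3))) ∧
  (∀ (b : Bool), ∀ x ∈ od, ∀ z ∈ pt K ev od b, ω x z ∈ pt K ev od b)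

end DeformationTheory

section Truncations
variable {P : Type*} [AddCommGroup P]

/-- The product of `P_k[[t]] = P[[t]]/(t^{k+1})`, realized on coefficient tuples
`Fin (k+1) → P` by convolution. -/
def truncMul (mul : P → P → P) (k : ℕ) (f g : Fin (k + 1) → P) : Fin (k + 1) → P :=
  fun r => ∑ i : Fin (k + 1), ∑ j : Fin (k + 1),
    if (i : ℕ) + (j : ℕ) = (r : ℕ) then mul (f i) (g j) else 0

/-- The deformed bracket `μ_t = Σ tᵃ μ_a` (with `μ_0` the original bracket) on
coefficient tuples. -/
def truncBr (μ : ℕ → P → P → P) (k : ℕ) (f g : Fin (k + 1) → P) : Fin (k + 1) → P :=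
  fun r => ∑ a ∈ Finset.range (k + 1), ∑ i : Fin (k + 1), ∑ j : Fin (k + 1),
    if a + (i : ℕ) + (j : ℕ) = (r : ℕ) then μ a (f i) (g j) else 0

/-- The deformed squaring `ω_t = Σ tᵃ ω_a` (with `ω_0` the original squaring) on
coefficient tuples; quadratic terms use the polar forms `μ_a`. -/
def truncSq (μ : ℕ → P → P → P) (ωs : ℕ → P → P) (k : ℕ) (f : Fin (k + 1) → P) :
    Fin (k + 1) → P :=
  fun r =>
    (∑ a ∈ Finset.range (k + 1), ∑ b : Fin (k + 1),
      if a + 2 * (b : ℕ) = (r : ℕ) then ωs a (f b) else 0) +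
    ∑ a ∈ Finset.range (k + 1), ∑ b : Fin (k + 1), ∑ c : Fin (k + 1),
      if a + (b : ℕ) + (c : ℕ) = (r : ℕ) ∧ (b : ℕ) < (c : ℕ) then μ a (f b) (f c) else 0

end Truncations

section DeformationTheory2
variable (K : Type*) [Field K] {P : Type*} [AddCommGroup P] [Module K P]

/-- A formal deformation of order `k` of the Poisson superalgebra
`(P, mul, br, sq)`: coefficient maps `μ_i, ω_i` for `1 ≤ i ≤ k` which are even
Poisson 2-cochains, extending `μ_0 = br`, `ω_0 = sq`, such that the truncated
structure is a Poisson superalgebra on `P[[t]]/(t^{k+1})` in characteristic 2. -/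
def IsDeformation (ev od : Submodule K P) (mul br : P → P → P) (sq : P → P)
    (k : ℕ) (μ : ℕ → P → P → P) (ωs : ℕ → P → P) : Prop :=
  μ 0 = br ∧ ωs 0 = sq ∧
  (∀ i, 1 ≤ i → i ≤ k →
    IsPoisson2Cochain2 K ev od mul (μ i) (ωs i) ∧ Cochain2Even K ev od (μ i) (ωs i)) ∧
  IsPoisson2 K
    (Submodule.pi Set.univ fun _ : Fin (k + 1) => ev)
    (Submodule.pi Set.univ fun _ : Fin (k + 1) => od)
    (truncMul mul k) (truncBr μ k) (truncSq μ ωs k)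

end DeformationTheory2

/-- For a formal deformation of order `k` of a Poisson superalgebra
`P` in characteristic 2, the obstruction pair `(Obs¹_{k+1}, Obs²_{k+1})` is an even
Poisson 3-cochain of `P`. -/
theorem obstruction_is_even_3cochain
    {K P : Type*} [Field K] [CharP K 2] [AddCommGroup P] [Module K P]
    (ev od : Submodule K P) (mul br : P → P → P) (sq : P → P)
    (hP : IsPoisson2 K ev od mul br sq)
    (k : ℕ) (hk : 1 ≤ k) (μ : ℕ → P → P → P) (ωs : ℕ → P → P)
    (hdef : IsDeformation K ev od mul br sq k μ ωs) :
    IsPoisson2Cochain3 K ev od mul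
      (fun x y z => ∑ i ∈ Finset.Icc 1 k,
        (μ i x (μ (k + 1 - i) y z) + μ i y (μ (k + 1 - i) z x) +
          μ i z (μ (k + 1 - i) x y)))
      (fun x y => ∑ i ∈ Finset.Icc 1 k,
        (μ i y (ωs (k + 1 - i) x) + μ i x (μ (k + 1 - i) x y))) ∧
    Cochain3Even K ev od
      (fun x y z => ∑ i ∈ Finset.Icc 1 k,
        (μ i x (μ (k + 1 - i) y z) + μ i y (μ (k + 1 - i) z x) +
          μ i z (μ (k + 1 - i) x y)))
      (fun x y => ∑ i ∈ Finset.Icc 1 k,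
        (μ i y (ωs (k + 1 - i) x) + μ i x (μ (k + 1 - i) x y))) := by
    classical
  obtain ⟨hμ0, hω0, hco, hPois⟩ := hdef
  have hc : ∀ i ∈ Finset.Icc 1 k, IsPoisson2Cochain2 K ev od mul (μ i) (ωs i) := by
    intro i hi
    rcases Finset.mem_Icc.mp hi with ⟨ha, hb⟩
    exact (hco i ha hb).1
  have hev2 : ∀ i ∈ Finset.Icc 1 k, Cochain2Even K ev od (μ i) (ωs i) := by
    intro i hi
    rcases Finset.mem_Icc.mp hi with ⟨ha, hb⟩
    exact (hco i ha hb).2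
  have hmemS : ∀ i ∈ Finset.Icc 1 k, k + 1 - i ∈ Finset.Icc 1 k := by
    intro i hi
    rcases Finset.mem_Icc.mp hi with ⟨ha, hb⟩
    exact Finset.mem_Icc.mpr ⟨by omega, by omega⟩
  have hCA := hP.commAlg
  have mcomm : ∀ a b : P, mul a b = mul b a := hCA.comm
  have massoc : ∀ a b c : P, mul (mul a b) c = mul a (mul b c) := hCA.assoc
  have mzl : ∀ a : P, mul 0 a = 0 := by
    intro a
    have h := hCA.smul_left 0 0 a
    simpa using h
  have mzr : ∀ a : P, mul a 0 = 0 := fun a => by rw [mcomm]; exact mzl a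
  have maddl : ∀ a b c : P, mul (a + b) c = mul a c + mul b c := hCA.add_left
  have maddr : ∀ a b c : P, mul a (b + c) = mul a b + mul a c := by
    intro a b c
    rw [mcomm, maddl, mcomm b, mcomm c]
  have h2 : ∀ p : P, p + p = 0 := by
    intro p
    have h : (2 : K) • p = 0 := by
      rw [show (2 : K) = 0 from by exact_mod_cast CharP.cast_eq_zero K 2, zero_smul]
    rwa [two_smul] at h
  have heq : ∀ a b : P, a + b = 0 → a = b := by
    intro a b hab
    have h := congrArg (· + b) hab
    simpa [add_assoc, h2 b] using h
  have μzr : ∀ i ∈ Finset.Icc 1 k, ∀ a : P, μ i a 0 = 0 := by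
    intro i hi a
    have h := (hc i hi).φ_smul_right 0 a 0
    simpa using h
  have μsymm : ∀ i ∈ Finset.Icc 1 k, ∀ a b : P, μ i a b = μ i b a := by
    intro i hi a b
    have c := hc i hi
    apply heq
    have h0 : μ i (a + b) (a + b) = 0 := c.φ_alt _
    rw [c.φ_add_left, c.φ_add_right, c.φ_add_right, c.φ_alt a, c.φ_alt b] at h0
    simpa [add_comm, add_left_comm] using h0
  have μderl : ∀ i ∈ Finset.Icc 1 k, ∀ a b m : P,
      μ i (mul a b) m = mul a (μ i b m) + mul b (μ i a m) :=
    fun i hi => (hc i hi).φ_der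
  have μderr : ∀ i ∈ Finset.Icc 1 k, ∀ m a b : P,
      μ i m (mul a b) = mul a (μ i b m) + mul b (μ i a m) := by
    intro i hi m a b
    rw [μsymm i hi]
    exact (hc i hi).φ_der a b m
  have reindex : ∀ g : ℕ → P,
      ∑ i ∈ Finset.Icc 1 k, g i = ∑ i ∈ Finset.Icc 1 k, g (k + 1 - i) := by
    intro g
    refine Finset.sum_nbij' (fun i => k + 1 - i) (fun i => k + 1 - i) ?_ ?_ ?_ ?_ ?_ <;>
      intro a ha <;> rcases Finset.mem_Icc.mp ha with ⟨h1, hb⟩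
    · exact Finset.mem_Icc.mpr ⟨by omega, by omega⟩
    · exact Finset.mem_Icc.mpr ⟨by omega, by omega⟩
    · omega
    · omega
    · congr 1
      omega
  have cancel : ∀ f g : ℕ → P, (∀ i ∈ Finset.Icc 1 k, g i = f (k + 1 - i)) →
      ∑ i ∈ Finset.Icc 1 k, (f i + g i) = 0 := by
    intro f g hg
    have h1 : ∑ i ∈ Finset.Icc 1 k, g i = ∑ i ∈ Finset.Icc 1 k, f i :=
      (Finset.sum_congr rfl hg).trans (reindex f).symm
    rw [Finset.sum_add_distrib, h1]
    exact h2 _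
  have mulsum : ∀ (a : P) (s : Finset ℕ) (f : ℕ → P),
      mul a (∑ i ∈ s, f i) = ∑ i ∈ s, mul a (f i) := by
    intro a s f
    exact map_sum (AddMonoidHom.mk' (mul a) (fun b c => maddr a b c)) f s
  refine ⟨⟨?_, ?_, ?_, ?_, ?_, ?_, ?_, ?_, ?_, ?_, ?_, ?_, ?_, ?_, ?_, ?_⟩, ?_, ?_⟩
  -- φ_add1
  · intro x x' y z
    rw [← Finset.sum_add_distrib]
    refine Finset.sum_congr rfl fun i hi => ?_
    have c := hc i hi
    have d := hc _ (hmemS i hi)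
    rw [c.φ_add_left, d.φ_add_right, c.φ_add_right, d.φ_add_left, c.φ_add_right]
    abel
  -- φ_smul1
  · intro c x y z
    rw [Finset.smul_sum]
    refine Finset.sum_congr rfl fun i hi => ?_
    have cc := hc i hi
    have d := hc _ (hmemS i hi)
    rw [cc.φ_smul_left, d.φ_smul_right, cc.φ_smul_right, d.φ_smul_left, cc.φ_smul_right,
      smul_add, smul_add]
  -- φ_add2
  · intro x y y' z
    rw [← Finset.sum_add_distrib]
    refine Finset.sum_congr rfl fun i hi => ?_
    have c := hc i hi
    have d := hc _ (hmemS i hi)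
    rw [d.φ_add_left, c.φ_add_right, c.φ_add_left, d.φ_add_right, c.φ_add_right]
    abel
  -- φ_smul2
  · intro c x y z
    rw [Finset.smul_sum]
    refine Finset.sum_congr rfl fun i hi => ?_
    have cc := hc i hi
    have d := hc _ (hmemS i hi)
    rw [d.φ_smul_left, cc.φ_smul_right, cc.φ_smul_left, d.φ_smul_right, cc.φ_smul_right,
      smul_add, smul_add]
  -- φ_add3
  · intro x y z z'
    rw [← Finset.sum_add_distrib]
    refine Finset.sum_congr rfl fun i hi => ?_
    have c := hc i hi
    have d := hc _ (hmemS i hi)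
    rw [d.φ_add_right, c.φ_add_right, d.φ_add_left, c.φ_add_right, c.φ_add_left]
    abel
  -- φ_smul3
  · intro c x y z
    rw [Finset.smul_sum]
    refine Finset.sum_congr rfl fun i hi => ?_
    have cc := hc i hi
    have d := hc _ (hmemS i hi)
    rw [d.φ_smul_right, cc.φ_smul_right, d.φ_smul_left, cc.φ_smul_right, cc.φ_smul_left,
      smul_add, smul_add]
  -- φ_alt12
  · intro x z
    refine Finset.sum_eq_zero fun i hi => ?_
    have c := hc i hi
    have d := hc _ (hmemS i hi)
    rw [d.φ_alt, μzr i hi, add_zero, μsymm _ (hmemS i hi) z x]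
    exact h2 _
  -- φ_alt23
  · intro x y
    refine Finset.sum_eq_zero fun i hi => ?_
    have c := hc i hi
    have d := hc _ (hmemS i hi)
    rw [d.φ_alt, μzr i hi, zero_add, μsymm _ (hmemS i hi) y x]
    exact h2 _
  -- φ_alt13
  · intro x y
    refine Finset.sum_eq_zero fun i hi => ?_
    have c := hc i hi
    have d := hc _ (hmemS i hi)
    rw [d.φ_alt, μzr i hi, add_zero, μsymm _ (hmemS i hi) y x]
    exact h2 _
  -- φ_der
  · intro x y z w
    have E : ∀ i ∈ Finset.Icc 1 k,
        (μ i (mul x y) (μ (k+1-i) z w) + μ i z (μ (k+1-i) w (mul x y)) +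
          μ i w (μ (k+1-i) (mul x y) z))
        = (mul x (μ i y (μ (k+1-i) z w) + μ i z (μ (k+1-i) w y) + μ i w (μ (k+1-i) y z))
          + mul y (μ i x (μ (k+1-i) z w) + μ i z (μ (k+1-i) w x) + μ i w (μ (k+1-i) x z)))
        + ((mul (μ (k+1-i) y w) (μ i x z) + mul (μ (k+1-i) x w) (μ i y z))
          + (mul (μ (k+1-i) y z) (μ i x w) + mul (μ (k+1-i) x z) (μ i y w))) := by
      intro i hi
      have c := hc i hi
      have hi' := hmemS i hi
      have d := hc _ hi'
      have cs := μsymm i hi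
      have ds := μsymm _ hi'
      rw [c.φ_der, μderr _ hi' w x y, c.φ_add_right,
        μderr i hi z x (μ (k+1-i) y w), μderr i hi z y (μ (k+1-i) x w),
        μderl _ hi' x y z, c.φ_add_right,
        μderr i hi w x (μ (k+1-i) y z), μderr i hi w y (μ (k+1-i) x z),
        maddr x, maddr x, maddr y, maddr y]
      rw [show μ i z (μ (k+1-i) w y) = μ i (μ (k+1-i) y w) z from by rw [ds w y]; exact cs z _,
        show μ i z (μ (k+1-i) w x) = μ i (μ (k+1-i) x w) z from by rw [ds w x]; exact cs z _,
        show μ i w (μ (k+1-i) y z) = μ i (μ (k+1-i) y z) w from cs w _,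
        show μ i w (μ (k+1-i) x z) = μ i (μ (k+1-i) x z) w from cs w _]
      abel
    rw [Finset.sum_congr rfl E, Finset.sum_add_distrib]
    have hcross :
        ∑ i ∈ Finset.Icc 1 k,
          ((mul (μ (k+1-i) y w) (μ i x z) + mul (μ (k+1-i) x w) (μ i y z))
            + (mul (μ (k+1-i) y z) (μ i x w) + mul (μ (k+1-i) x z) (μ i y w))) = 0 := by
      refine cancel (fun i => mul (μ (k+1-i) y w) (μ i x z) + mul (μ (k+1-i) x w) (μ i y z))
        (fun i => mul (μ (k+1-i) y z) (μ i x w) + mul (μ (k+1-i) x z) (μ i y w)) ?_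
      intro i hi
      have h1 : k + 1 - (k + 1 - i) = i := by
        rcases Finset.mem_Icc.mp hi with ⟨ha, hb⟩; omega
      rw [h1, mcomm (μ (k+1-i) y z) (μ i x w), mcomm (μ (k+1-i) x z) (μ i y w)]
      exact add_comm _ _
    rw [hcross, add_zero, Finset.sum_add_distrib,
      ← mulsum x (Finset.Icc 1 k)
        (fun i => μ i y (μ (k+1-i) z w) + μ i z (μ (k+1-i) w y) + μ i w (μ (k+1-i) y z)),
      ← mulsum y (Finset.Icc 1 k)
        (fun i => μ i x (μ (k+1-i) z w) + μ i z (μ (k+1-i) w x) + μ i w (μ (k+1-i) x z))]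
  -- ω_smul
  · intro c x hx z
    rw [Finset.smul_sum]
    refine Finset.sum_congr rfl fun i hi => ?_
    have cc := hc i hi
    have d := hc _ (hmemS i hi)
    rw [d.ω_smul c x hx, cc.φ_smul_right, cc.φ_smul_left, d.φ_smul_left, cc.φ_smul_right,
      smul_smul, ← smul_add]
  -- ω_polar
  · intro x hx y hy z
    rw [← Finset.sum_add_distrib, ← Finset.sum_add_distrib]
    refine Finset.sum_congr rfl fun i hi => ?_
    have cc := hc i hi
    have hi' := hmemS i hi
    have d := hc _ hi'
    have ds := μsymm _ hi'
    rw [d.ω_polar x hx y hy, cc.φ_add_right, cc.φ_add_right, cc.φ_add_left, d.φ_add_left,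
      cc.φ_add_right, cc.φ_add_right, ds z x]
    abel
  -- ω_add2
  · intro x z z'
    rw [← Finset.sum_add_distrib]
    refine Finset.sum_congr rfl fun i hi => ?_
    have cc := hc i hi
    have d := hc _ (hmemS i hi)
    rw [cc.φ_add_left, d.φ_add_right, cc.φ_add_right]
    abel
  -- ω_smul2
  · intro x c z
    rw [Finset.smul_sum]
    refine Finset.sum_congr rfl fun i hi => ?_
    have cc := hc i hi
    have d := hc _ (hmemS i hi)
    rw [cc.φ_smul_left, d.φ_smul_right, cc.φ_smul_right, ← smul_add]
  -- ω_mul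
  · intro x hx y hy z
    have E : ∀ i ∈ Finset.Icc 1 k,
        (μ i z (ωs (k+1-i) (mul x y)) + μ i (mul x y) (μ (k+1-i) (mul x y) z))
        = (mul (mul y y) (μ i z (ωs (k+1-i) x) + μ i x (μ (k+1-i) x z))
          + mul (mul x y)
            (μ i x (μ (k+1-i) y z) + μ i y (μ (k+1-i) z x) + μ i z (μ (k+1-i) x y)))
        + ((mul x (mul (μ (k+1-i) y z) (μ i x y)) + mul y (mul (μ (k+1-i) x z) (μ i x y)))
          + (mul x (mul (μ (k+1-i) x y) (μ i y z)) + mul y (mul (μ (k+1-i) x y) (μ i x z)))) := by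
      intro i hi
      have c := hc i hi
      have hi' := hmemS i hi
      have d := hc _ hi'
      have cs := μsymm i hi
      have ds := μsymm _ hi'
      rw [d.ω_mul x hx y hy, c.φ_add_right,
        μderr i hi z (mul y y) (ωs (k+1-i) x),
        μderr i hi z (mul x y) (μ (k+1-i) x y),
        μderl i hi y y z, h2 (mul y (μ i y z)), mzr,
        μderl i hi x y z, maddr (μ (k+1-i) x y),
        μderl _ hi' x y z, c.φ_add_right,
        μderl i hi x y (mul x (μ (k+1-i) y z)),
        μderl i hi x y (mul y (μ (k+1-i) x z)),
        μderr i hi y x (μ (k+1-i) y z),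
        μderr i hi x x (μ (k+1-i) y z),
        μderr i hi y y (μ (k+1-i) x z),
        μderr i hi x y (μ (k+1-i) x z),
        c.φ_alt x, c.φ_alt y, mzr, mzr, add_zero, add_zero,
        maddr x, maddr y,
        ← massoc x x, hCA.alt_od x hx, mzl, zero_add,
        ← massoc y x, mcomm y x, massoc x y,
        ← massoc x y,
        ← massoc y y,
        cs y x]
      simp only [add_zero, zero_add]
      rw [show μ i z (ωs (k+1-i) x) = μ i (ωs (k+1-i) x) z from cs z _,
        show μ i x (μ (k+1-i) x z) = μ i (μ (k+1-i) x z) x from by rw [cs x _],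
        show μ i x (μ (k+1-i) y z) = μ i (μ (k+1-i) y z) x from cs x _,
        show μ i y (μ (k+1-i) z x) = μ i (μ (k+1-i) x z) y from by rw [ds z x]; exact cs y _,
        show μ i z (μ (k+1-i) x y) = μ i (μ (k+1-i) x y) z from cs z _,
        maddr (mul y y), maddr (mul x y), maddr (mul x y),
        show mul (μ (k+1-i) x y) (mul x (μ i y z)) = mul x (mul (μ (k+1-i) x y) (μ i y z))
          from by rw [← massoc, mcomm (μ (k+1-i) x y) x, massoc],
        show mul (μ (k+1-i) x y) (mul y (μ i x z)) = mul y (mul (μ (k+1-i) x y) (μ i x z))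
          from by rw [← massoc, mcomm (μ (k+1-i) x y) y, massoc],
        massoc x y, massoc y y,
        show mul x (mul y (μ i (μ (k+1-i) x z) y)) = mul (mul x y) (μ i (μ (k+1-i) x z) y)
          from (massoc x y _).symm]
      abel
    rw [Finset.sum_congr rfl E, Finset.sum_add_distrib]
    have hcross :
        ∑ i ∈ Finset.Icc 1 k,
          ((mul x (mul (μ (k+1-i) y z) (μ i x y)) + mul y (mul (μ (k+1-i) x z) (μ i x y)))
            + (mul x (mul (μ (k+1-i) x y) (μ i y z)) + mul y (mul (μ (k+1-i) x y) (μ i x z))))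
          = 0 := by
      refine cancel
        (fun i => mul x (mul (μ (k+1-i) y z) (μ i x y)) + mul y (mul (μ (k+1-i) x z) (μ i x y)))
        (fun i => mul x (mul (μ (k+1-i) x y) (μ i y z)) + mul y (mul (μ (k+1-i) x y) (μ i x z)))
        ?_
      intro i hi
      have h1 : k + 1 - (k + 1 - i) = i := by
        rcases Finset.mem_Icc.mp hi with ⟨ha, hb⟩; omega
      rw [h1, mcomm (μ (k+1-i) x y) (μ i y z), mcomm (μ (k+1-i) x y) (μ i x z)]
    rw [hcross, add_zero, Finset.sum_add_distrib,
      ← mulsum (mul y y) (Finset.Icc 1 k)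
        (fun i => μ i z (ωs (k+1-i) x) + μ i x (μ (k+1-i) x z)),
      ← mulsum (mul x y) (Finset.Icc 1 k)
        (fun i => μ i x (μ (k+1-i) y z) + μ i y (μ (k+1-i) z x) + μ i z (μ (k+1-i) x y))]
  -- ω_der2
  · intro x z z'
    have E : ∀ i ∈ Finset.Icc 1 k,
        (μ i (mul z z') (ωs (k+1-i) x) + μ i x (μ (k+1-i) x (mul z z')))
        = (mul z (μ i z' (ωs (k+1-i) x) + μ i x (μ (k+1-i) x z'))
          + mul z' (μ i z (ωs (k+1-i) x) + μ i x (μ (k+1-i) x z)))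
        + (mul (μ (k+1-i) z' x) (μ i z x) + mul (μ (k+1-i) z x) (μ i z' x)) := by
      intro i hi
      have c := hc i hi
      have hi' := hmemS i hi
      have d := hc _ hi'
      have cs := μsymm i hi
      have ds := μsymm _ hi'
      rw [μderl i hi z z' (ωs (k+1-i) x), μderr _ hi' x z z', c.φ_add_right,
        μderr i hi x z (μ (k+1-i) z' x), μderr i hi x z' (μ (k+1-i) z x),
        maddr z, maddr z']
      rw [show μ i x (μ (k+1-i) x z') = μ i (μ (k+1-i) z' x) x from by rw [ds x z']; exact cs x _,
        show μ i x (μ (k+1-i) x z) = μ i (μ (k+1-i) z x) x from by rw [ds x z]; exact cs x _]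
      abel
    rw [Finset.sum_congr rfl E, Finset.sum_add_distrib]
    have hcross :
        ∑ i ∈ Finset.Icc 1 k,
          (mul (μ (k+1-i) z' x) (μ i z x) + mul (μ (k+1-i) z x) (μ i z' x)) = 0 := by
      refine cancel (fun i => mul (μ (k+1-i) z' x) (μ i z x))
        (fun i => mul (μ (k+1-i) z x) (μ i z' x)) ?_
      intro i hi
      have h1 : k + 1 - (k + 1 - i) = i := by
        rcases Finset.mem_Icc.mp hi with ⟨ha, hb⟩; omega
      rw [h1, mcomm (μ (k+1-i) z x) (μ i z' x)]
    rw [hcross, add_zero, Finset.sum_add_distrib,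
      ← mulsum z (Finset.Icc 1 k)
        (fun i => μ i z' (ωs (k+1-i) x) + μ i x (μ (k+1-i) x z')),
      ← mulsum z' (Finset.Icc 1 k)
        (fun i => μ i z (ωs (k+1-i) x) + μ i x (μ (k+1-i) x z))]
  -- evenness of φ
  · intro b1 b2 b3 x hxx y hyy z hzz
    refine Submodule.sum_mem _ fun i hi => ?_
    have he := hev2 i hi
    have hd := hev2 _ (hmemS i hi)
    have t1 := he.1 b1 (xor b2 b3) x hxx _ (hd.1 b2 b3 y hyy z hzz)
    have t2 := he.1 b2 (xor b3 b1) y hyy _ (hd.1 b3 b1 z hzz x hxx)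
    have t3 := he.1 b3 (xor b1 b2) z hzz _ (hd.1 b1 b2 x hxx y hyy)
    have e2 : xor b2 (xor b3 b1) = xor b1 (xor b2 b3) := by
      cases b1 <;> cases b2 <;> cases b3 <;> rfl
    have e3 : xor b3 (xor b1 b2) = xor b1 (xor b2 b3) := by
      cases b1 <;> cases b2 <;> cases b3 <;> rfl
    rw [e2] at t2
    rw [e3] at t3
    exact add_mem (add_mem t1 t2) t3
  -- evenness of ω
  · intro b x hx z hz
    refine Submodule.sum_mem _ fun i hi => ?_
    have he := hev2 i hi
    have hd := hev2 _ (hmemS i hi)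
    have t1 := he.1 b false z hz _ (hd.2 x hx)
    have t2 := he.1 true (xor true b) x hx _ (hd.1 true b x hx z hz)
    have e1 : xor b false = b := by cases b <;> rfl
    have e2 : xor true (xor true b) = b := by cases b <;> rfl
    rw [e1] at t1
    rw [e2] at t2
    exact add_mem t1 t2
end

section
/- Let (P, {-,-}, s) be a Poisson superalgebra over a field K of characteristic 2, let k ≥ 1, and let (P_k[[t]], μ_(k), ω_(k)) and (P_k[[t]], μ′_(k), ω′_(k)) be two formal deformations of order k of P which are equivalent via an isomorphism of Poisson superalgebras ψ_t = id + Σ_{i≥1} tⁱψ_i. Then ψ₁ is a derivation of the associative product of P (ψ₁(xy) = ψ₁(x)y + xψ₁(y)), and the first-order terms satisfy (μ₁, ω₁) = (μ₁′, ω₁′) + d¹_po ψ₁; consequently (μ₁, ω₁) and (μ₁′, ω₁′) define the same class in the even part of the second Poisson cohomology group XH²_po(P)₀. -/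
/-- The map `ψ_t = Σ tⁱ ψ_i` on coefficient tuples. -/
def truncMap {P : Type*} [AddCommGroup P]
    (ψ : ℕ → P → P) (k : ℕ) (f : Fin (k + 1) → P) : Fin (k + 1) → P :=
  fun r => ∑ i : Fin (k + 1), ∑ j : Fin (k + 1),
    if (i : ℕ) + (j : ℕ) = (r : ℕ) then ψ (i : ℕ) (f j) else 0

section MySumHelpers

variable {P : Type*} [AddCommMonoid P]

/-- The tuple supported at coefficient `0`. -/
def mySingle0 {n : ℕ} [NeZero n] (z : P) : Fin n → P :=
  fun j => if j = 0 then z else 0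

lemma mySingle0_zero {n : ℕ} [NeZero n] (z : P) : mySingle0 (n := n) z 0 = z := if_pos rfl

lemma mySingle0_ne {n : ℕ} [NeZero n] (z : P) {j : Fin n} (hj : j ≠ 0) :
    mySingle0 (n := n) z j = 0 := if_neg hj

lemma my_sum_fin_ite {n : ℕ} (g : Fin n → P) (r : Fin n) :
    (∑ i : Fin n, if (i : ℕ) = (r : ℕ) then g i else 0) = g r := by
  rw [Finset.sum_eq_single r]
  · simp
  · intro b _ hb
    exact if_neg fun h => hb (Fin.ext h)
  · simp

lemma my_dsum_right0 {n : ℕ} [NeZero n] (r : ℕ) (g : Fin n → Fin n → P)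
    (h : ∀ i j, j ≠ 0 → g i j = 0) :
    (∑ i : Fin n, ∑ j : Fin n, if (i : ℕ) + (j : ℕ) = r then g i j else 0)
      = ∑ i : Fin n, if (i : ℕ) = r then g i 0 else 0 := by
  refine Finset.sum_congr rfl fun i _ => ?_
  rw [Finset.sum_eq_single 0]
  · simp
  · intro j _ hj
    rw [h i j hj, ite_self]
  · simp

lemma my_dsum_one {k : ℕ} (hk : 1 ≤ k) (g : Fin (k + 1) → Fin (k + 1) → P) :
    (∑ i : Fin (k + 1), ∑ j : Fin (k + 1), if (i : ℕ) + (j : ℕ) = 1 then g i j else 0)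
      = g 0 ⟨1, Nat.lt_succ_of_le hk⟩ + g ⟨1, Nat.lt_succ_of_le hk⟩ 0 := by
  set i1 : Fin (k + 1) := ⟨1, Nat.lt_succ_of_le hk⟩ with hi1
  have hv1 : (i1 : ℕ) = 1 := rfl
  have h01 : (0 : Fin (k + 1)) ≠ i1 := by
    intro h
    have := congrArg Fin.val h
    simp [hv1] at this
  have key : ∀ i : Fin (k + 1),
      (∑ j : Fin (k + 1), if (i : ℕ) + (j : ℕ) = 1 then g i j else 0)
        = (if i = 0 then g 0 i1 else 0) + (if i = i1 then g i1 0 else 0) := by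
    intro i
    rcases eq_or_ne i 0 with h0 | h0
    · subst h0
      rw [if_pos rfl, if_neg h01, add_zero]
      rw [Finset.sum_eq_single i1]
      · simp [hv1]
      · intro j _ hj
        refine if_neg fun h => hj (Fin.ext ?_)
        simp only [Fin.val_zero] at h
        simpa [hv1] using h
      · simp
    · rcases eq_or_ne i i1 with h1 | h1
      · subst h1
        rw [if_neg h0, if_pos rfl, zero_add]
        rw [Finset.sum_eq_single 0]
        · simp [hv1]
        · intro j _ hj
          refine if_neg fun h => hj (Fin.ext ?_)
          simp only [hv1] at h
          simp only [Fin.val_zero]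
          omega
        · simp
      · rw [if_neg h0, if_neg h1, add_zero]
        refine Finset.sum_eq_zero fun j _ => if_neg fun h => ?_
        have hv0 : (i : ℕ) ≠ 0 := fun hh => h0 (Fin.ext (by simpa using hh))
        have hvv : (i : ℕ) ≠ 1 := fun hh => h1 (Fin.ext (by simpa [hv1] using hh))
        omega
  rw [Finset.sum_congr rfl fun i _ => key i, Finset.sum_add_distrib,
    Finset.sum_ite_eq', Finset.sum_ite_eq']
  simp

lemma my_tsum_one {k : ℕ} (hk : 1 ≤ k) (g : ℕ → Fin (k + 1) → Fin (k + 1) → P) :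
    (∑ a ∈ Finset.range (k + 1), ∑ i : Fin (k + 1), ∑ j : Fin (k + 1),
        if a + (i : ℕ) + (j : ℕ) = 1 then g a i j else 0)
      = (g 0 0 ⟨1, Nat.lt_succ_of_le hk⟩ + g 0 ⟨1, Nat.lt_succ_of_le hk⟩ 0) + g 1 0 0 := by
  set i1 : Fin (k + 1) := ⟨1, Nat.lt_succ_of_le hk⟩ with hi1
  have key : ∀ a ∈ Finset.range (k + 1),
      (∑ i : Fin (k + 1), ∑ j : Fin (k + 1),
          if a + (i : ℕ) + (j : ℕ) = 1 then g a i j else 0)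
        = (if a = 0 then g 0 0 i1 + g 0 i1 0 else 0) + (if a = 1 then g 1 0 0 else 0) := by
    intro a _
    match a with
    | 0 =>
      rw [if_pos rfl, if_neg (by norm_num), add_zero]
      have := my_dsum_one hk (g 0)
      simpa only [Nat.zero_add] using this
    | 1 =>
      rw [if_neg (by norm_num), if_pos rfl, zero_add]
      rw [Finset.sum_eq_single (0 : Fin (k + 1))]
      · rw [Finset.sum_eq_single (0 : Fin (k + 1))]
        · simp
        · intro j _ hj
          refine if_neg fun h => hj (Fin.ext ?_)
          simp only [Fin.val_zero] at h ⊢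
          omega
        · simp
      · intro i _ hi
        refine Finset.sum_eq_zero fun j _ => if_neg fun h => hi (Fin.ext ?_)
        simp only [Fin.val_zero]
        omega
      · simp
    | (n + 2) =>
      rw [if_neg (by omega), if_neg (by omega), add_zero]
      refine Finset.sum_eq_zero fun i _ => Finset.sum_eq_zero fun j _ => if_neg (by omega)
  rw [Finset.sum_congr rfl key, Finset.sum_add_distrib,
    Finset.sum_ite_eq', Finset.sum_ite_eq']
  rw [if_pos (Finset.mem_range.mpr (by omega)), if_pos (Finset.mem_range.mpr (by omega))]

lemma my_sqsum_one {k : ℕ} (hk : 1 ≤ k) (g : ℕ → Fin (k + 1) → P) :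
    (∑ a ∈ Finset.range (k + 1), ∑ b : Fin (k + 1),
        if a + 2 * (b : ℕ) = 1 then g a b else 0) = g 1 0 := by
  have key : ∀ a ∈ Finset.range (k + 1),
      (∑ b : Fin (k + 1), if a + 2 * (b : ℕ) = 1 then g a b else 0)
        = if a = 1 then g 1 0 else 0 := by
    intro a _
    rcases eq_or_ne a 1 with h | h
    · subst h
      rw [if_pos rfl, Finset.sum_eq_single (0 : Fin (k + 1))]
      · simp
      · intro b _ hb
        refine if_neg fun hc => hb (Fin.ext ?_)
        simp only [Fin.val_zero]
        omega
      · simp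
    · rw [if_neg h]
      exact Finset.sum_eq_zero fun b _ => if_neg fun hc => h (by omega)
  rw [Finset.sum_congr rfl key, Finset.sum_ite_eq',
    if_pos (Finset.mem_range.mpr (by omega))]

lemma my_sq3sum_one {k : ℕ} (hk : 1 ≤ k) (g : ℕ → Fin (k + 1) → Fin (k + 1) → P) :
    (∑ a ∈ Finset.range (k + 1), ∑ b : Fin (k + 1), ∑ c : Fin (k + 1),
        if a + (b : ℕ) + (c : ℕ) = 1 ∧ (b : ℕ) < (c : ℕ) then g a b c else 0)
      = g 0 0 ⟨1, Nat.lt_succ_of_le hk⟩ := by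
  set i1 : Fin (k + 1) := ⟨1, Nat.lt_succ_of_le hk⟩ with hi1
  have hv1 : (i1 : ℕ) = 1 := rfl
  have key : ∀ a ∈ Finset.range (k + 1),
      (∑ b : Fin (k + 1), ∑ c : Fin (k + 1),
          if a + (b : ℕ) + (c : ℕ) = 1 ∧ (b : ℕ) < (c : ℕ) then g a b c else 0)
        = if a = 0 then g 0 0 i1 else 0 := by
    intro a _
    rcases eq_or_ne a 0 with h | h
    · subst h
      rw [if_pos rfl, Finset.sum_eq_single (0 : Fin (k + 1))]
      · rw [Finset.sum_eq_single i1]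
        · rw [if_pos (by simp [hv1])]
        · intro c _ hc
          refine if_neg fun hcc => hc (Fin.ext ?_)
          obtain ⟨h1, h2⟩ := hcc
          simp only [Fin.val_zero] at h1 h2
          simp only [hv1]
          omega
        · simp
      · intro b _ hb
        have hbv : (b : ℕ) ≠ 0 := fun hh => hb (Fin.ext (by simpa using hh))
        refine Finset.sum_eq_zero fun c _ => if_neg fun hcc => ?_
        obtain ⟨h1, h2⟩ := hcc
        omega
      · simp
    · rw [if_neg h]
      refine Finset.sum_eq_zero fun b _ => Finset.sum_eq_zero fun c _ =>
        if_neg fun hcc => ?_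
      obtain ⟨h1, h2⟩ := hcc
      omega
  rw [Finset.sum_congr rfl key, Finset.sum_ite_eq',
    if_pos (Finset.mem_range.mpr (by omega))]

end MySumHelpers

/-- If two formal deformations of order `k` of a Poisson
superalgebra `P` in characteristic 2 are equivalent via an even isomorphism
`ψ_t = id + Σ_{i≥1} tⁱψ_i`, then `ψ₁` is a derivation of the associative product of
`P` and `(μ₁, ω₁) = (μ₁', ω₁') + d¹_po ψ₁`; hence the two infinitesimal parts are
cohomologous, i.e. they define the same class in `XH²_po(P)₀`. -/
theorem equivalent_deformations_first_order
    {K P : Type*} [Field K] [CharP K 2] [AddCommGroup P] [Module K P]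
    (ev od : Submodule K P) (mul br : P → P → P) (sq : P → P)
    (hP : IsPoisson2 K ev od mul br sq)
    (k : ℕ) (hk : 1 ≤ k)
    (μ μ' : ℕ → P → P → P) (ωs ωs' : ℕ → P → P)
    (hdef : IsDeformation K ev od mul br sq k μ ωs)
    (hdef' : IsDeformation K ev od mul br sq k μ' ωs')
    (ψ : ℕ → P → P)
    (hψ0 : ψ 0 = id)
    (hψ_add : ∀ (i : ℕ) (x y : P), ψ i (x + y) = ψ i x + ψ i y)
    (hψ_smul : ∀ (i : ℕ) (c : K) (x : P), ψ i (c • x) = c • ψ i x)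
    (hψ_even_ev : ∀ (i : ℕ), ∀ x ∈ ev, ψ i x ∈ ev)
    (hψ_even_od : ∀ (i : ℕ), ∀ x ∈ od, ψ i x ∈ od)
    (hψ_bij : Function.Bijective (truncMap ψ k))
    (hψ_mul : ∀ f g : Fin (k + 1) → P,
      truncMap ψ k (truncMul mul k f g) =
        truncMul mul k (truncMap ψ k f) (truncMap ψ k g))
    (hψ_br : ∀ f g : Fin (k + 1) → P,
      truncMap ψ k (truncBr μ k f g) =
        truncBr μ' k (truncMap ψ k f) (truncMap ψ k g))
    (hψ_sq : ∀ f ∈ (Submodule.pi (Set.univ : Set (Fin (k + 1))) (fun _ => od)),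
      truncMap ψ k (truncSq μ ωs k f) = truncSq μ' ωs' k (truncMap ψ k f)) :
    (∀ x y : P, ψ 1 (mul x y) = mul (ψ 1 x) y + mul x (ψ 1 y)) ∧
    (∀ x y : P,
      μ 1 x y = μ' 1 x y + (br (ψ 1 x) y + br x (ψ 1 y) + ψ 1 (br x y))) ∧
    (∀ x ∈ od, ωs 1 x = ωs' 1 x + (ψ 1 (sq x) + br x (ψ 1 x))) := by
  obtain ⟨hμ0, hω0, hco, _⟩ := hdef
  obtain ⟨hμ0', hω0', hco', _⟩ := hdef'
  have hk1 : 1 < k + 1 := Nat.lt_succ_of_le hk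
  set i1 : Fin (k + 1) := ⟨1, Nat.lt_succ_of_le hk⟩ with hi1
  have hv1 : (i1 : ℕ) = 1 := rfl
  -- characteristic two on P
  have char2P : ∀ p : P, p + p = 0 := by
    intro p
    have h2 : (2 : K) = 0 := by exact_mod_cast CharP.cast_eq_zero K 2
    calc p + p = (2 : K) • p := (two_smul K p).symm
      _ = 0 := by rw [h2, zero_smul]
  -- basic vanishing facts
  have hψz : ∀ i : ℕ, ψ i (0 : P) = 0 := by
    intro i
    have := hψ_smul i 0 0
    simpa using this
  have hψ0' : ∀ p : P, ψ 0 p = p := fun p => by rw [hψ0]; rfl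
  have hmul0l : ∀ y : P, mul 0 y = 0 := by
    intro y
    have := hP.commAlg.smul_left 0 0 y
    simpa using this
  have hmul0r : ∀ y : P, mul y 0 = 0 := fun y => by
    rw [hP.commAlg.comm]; exact hmul0l y
  have hbr0l : ∀ y : P, br 0 y = 0 := by
    intro y
    have := hP.lieAlg.smul_left 0 0 y
    simpa using this
  have hbr0r : ∀ y : P, br y 0 = 0 := fun y => by
    rw [hP.lieAlg.symm]; exact hbr0l y
  have hμl : ∀ a, a ≤ k → ∀ y : P, μ a 0 y = 0 := by
    intro a ha y
    rcases Nat.eq_zero_or_pos a with h | h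
    · subst h; rw [hμ0]; exact hbr0l y
    · have := ((hco a h ha).1).φ_smul_left 0 0 y
      simpa using this
  have hμr : ∀ a, a ≤ k → ∀ y : P, μ a y 0 = 0 := by
    intro a ha y
    rcases Nat.eq_zero_or_pos a with h | h
    · subst h; rw [hμ0]; exact hbr0r y
    · have := ((hco a h ha).1).φ_smul_right 0 y 0
      simpa using this
  have hωz : ∀ a, a ≤ k → ωs a 0 = 0 := by
    intro a ha
    rcases Nat.eq_zero_or_pos a with h | h
    · subst h; rw [hω0]
      have := hP.lieAlg.sq_smul 0 0 od.zero_mem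
      simpa using this
    · have := ((hco a h ha).1).ω_smul 0 0 od.zero_mem
      simpa using this
  -- computations with single-supported tuples
  have hmap_single : ∀ z : P,
      truncMap ψ k (mySingle0 z) = fun r : Fin (k + 1) => ψ (r : ℕ) z := by
    intro z
    funext r
    show (∑ i : Fin (k + 1), ∑ j : Fin (k + 1),
        if (i : ℕ) + (j : ℕ) = (r : ℕ) then ψ (i : ℕ) (mySingle0 z j) else 0) = ψ (r : ℕ) z
    rw [my_dsum_right0 (r : ℕ) (fun i j => ψ (i : ℕ) (mySingle0 z j))
      (fun i j hj => by
        show ψ (i : ℕ) (mySingle0 z j) = 0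
        rw [mySingle0_ne z hj, hψz])]
    rw [show (fun i : Fin (k + 1) =>
        if (i : ℕ) = (r : ℕ) then ψ (i : ℕ) (mySingle0 z 0) else 0)
      = fun i : Fin (k + 1) => if (i : ℕ) = (r : ℕ) then ψ (i : ℕ) z else 0 by
        funext i; rw [mySingle0_zero]]
    exact my_sum_fin_ite (fun i : Fin (k + 1) => ψ (i : ℕ) z) r
  have hmul_single : ∀ x y : P,
      truncMul mul k (mySingle0 x) (mySingle0 y) = mySingle0 (mul x y) := by
    intro x y
    funext r
    show (∑ i : Fin (k + 1), ∑ j : Fin (k + 1),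
        if (i : ℕ) + (j : ℕ) = (r : ℕ) then mul (mySingle0 x i) (mySingle0 y j) else 0)
      = mySingle0 (mul x y) r
    rw [my_dsum_right0 (r : ℕ) (fun i j => mul (mySingle0 x i) (mySingle0 y j))
      (fun i j hj => by
        show mul (mySingle0 x i) (mySingle0 y j) = 0
        rw [mySingle0_ne y hj, hmul0r])]
    rw [my_sum_fin_ite (fun i : Fin (k + 1) => mul (mySingle0 x i) (mySingle0 y 0)) r]
    rcases eq_or_ne r 0 with h | h
    · subst h; rw [mySingle0_zero, mySingle0_zero, mySingle0_zero]
    · rw [mySingle0_ne x h, mySingle0_ne _ h, hmul0l]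
  have hbr_single : ∀ x y : P,
      truncBr μ k (mySingle0 x) (mySingle0 y) = fun r : Fin (k + 1) => μ (r : ℕ) x y := by
    intro x y
    funext r
    show (∑ a ∈ Finset.range (k + 1), ∑ i : Fin (k + 1), ∑ j : Fin (k + 1),
        if a + (i : ℕ) + (j : ℕ) = (r : ℕ) then μ a (mySingle0 x i) (mySingle0 y j) else 0)
      = μ (r : ℕ) x y
    have key : ∀ a ∈ Finset.range (k + 1),
        (∑ i : Fin (k + 1), ∑ j : Fin (k + 1),
          if a + (i : ℕ) + (j : ℕ) = (r : ℕ) then μ a (mySingle0 x i) (mySingle0 y j) else 0)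
          = if a = (r : ℕ) then μ a x y else 0 := by
      intro a ha
      have hak : a ≤ k := by
        have := Finset.mem_range.mp ha; omega
      have inner : ∀ i : Fin (k + 1),
          (∑ j : Fin (k + 1),
            if a + (i : ℕ) + (j : ℕ) = (r : ℕ) then μ a (mySingle0 x i) (mySingle0 y j) else 0)
            = if a + (i : ℕ) = (r : ℕ) then μ a (mySingle0 x i) y else 0 := by
        intro i
        rw [Finset.sum_eq_single (0 : Fin (k + 1))]
        · rw [mySingle0_zero]; simp
        · intro j _ hj; rw [mySingle0_ne y hj, hμr a hak, ite_self]
        · simp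
      rw [Finset.sum_congr rfl fun i _ => inner i]
      rw [Finset.sum_eq_single (0 : Fin (k + 1))]
      · rw [mySingle0_zero]; simp
      · intro i _ hi; rw [mySingle0_ne x hi, hμl a hak, ite_self]
      · simp
    rw [Finset.sum_congr rfl key, Finset.sum_ite_eq', if_pos (Finset.mem_range.mpr r.isLt)]
  have hsq_single : ∀ x : P,
      truncSq μ ωs k (mySingle0 x) = fun r : Fin (k + 1) => ωs (r : ℕ) x := by
    intro x
    funext r
    show (∑ a ∈ Finset.range (k + 1), ∑ b : Fin (k + 1),
        if a + 2 * (b : ℕ) = (r : ℕ) then ωs a (mySingle0 x b) else 0) +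
      (∑ a ∈ Finset.range (k + 1), ∑ b : Fin (k + 1), ∑ c : Fin (k + 1),
        if a + (b : ℕ) + (c : ℕ) = (r : ℕ) ∧ (b : ℕ) < (c : ℕ)
          then μ a (mySingle0 x b) (mySingle0 x c) else 0)
      = ωs (r : ℕ) x
    have h2 : (∑ a ∈ Finset.range (k + 1), ∑ b : Fin (k + 1), ∑ c : Fin (k + 1),
        if a + (b : ℕ) + (c : ℕ) = (r : ℕ) ∧ (b : ℕ) < (c : ℕ)
          then μ a (mySingle0 x b) (mySingle0 x c) else 0) = 0 := by
      refine Finset.sum_eq_zero fun a ha => Finset.sum_eq_zero fun b _ =>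
        Finset.sum_eq_zero fun c _ => ?_
      have hak : a ≤ k := by
        have := Finset.mem_range.mp ha; omega
      rcases eq_or_ne c 0 with h | h
      · subst h
        exact if_neg (by simp)
      · rw [mySingle0_ne x h, hμr a hak, ite_self]
    have h1 : (∑ a ∈ Finset.range (k + 1), ∑ b : Fin (k + 1),
        if a + 2 * (b : ℕ) = (r : ℕ) then ωs a (mySingle0 x b) else 0) = ωs (r : ℕ) x := by
      have key : ∀ a ∈ Finset.range (k + 1),
          (∑ b : Fin (k + 1), if a + 2 * (b : ℕ) = (r : ℕ) then ωs a (mySingle0 x b) else 0)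
            = if a = (r : ℕ) then ωs a x else 0 := by
        intro a ha
        have hak : a ≤ k := by
          have := Finset.mem_range.mp ha; omega
        rw [Finset.sum_eq_single (0 : Fin (k + 1))]
        · rw [mySingle0_zero]; simp
        · intro b _ hb; rw [mySingle0_ne x hb, hωz a hak, ite_self]
        · simp
      rw [Finset.sum_congr rfl key, Finset.sum_ite_eq',
        if_pos (Finset.mem_range.mpr r.isLt)]
    rw [h1, h2, add_zero]
  -- first claim: ψ 1 is a derivation of the product
  have claim1 : ∀ x y : P, ψ 1 (mul x y) = mul x (ψ 1 y) + mul (ψ 1 x) y := by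
    intro x y
    have H := congrFun (hψ_mul (mySingle0 x) (mySingle0 y)) i1
    rw [hmul_single, hmap_single, hmap_single, hmap_single] at H
    have HR : truncMul mul k (fun r : Fin (k + 1) => ψ (r : ℕ) x)
        (fun r : Fin (k + 1) => ψ (r : ℕ) y) i1 = mul x (ψ 1 y) + mul (ψ 1 x) y := by
      show (∑ i : Fin (k + 1), ∑ j : Fin (k + 1),
          if (i : ℕ) + (j : ℕ) = (i1 : ℕ) then mul (ψ (i : ℕ) x) (ψ (j : ℕ) y) else 0)
        = mul x (ψ 1 y) + mul (ψ 1 x) y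
      rw [hv1, my_dsum_one hk (fun i j => mul (ψ (i : ℕ) x) (ψ (j : ℕ) y))]
      rw [Fin.val_zero, hψ0' x, hψ0' y]
    rw [HR] at H
    simpa [hv1] using H
  -- second claim: the brackets differ by the coboundary
  have claim2 : ∀ x y : P,
      μ 1 x y + ψ 1 (br x y) = (br x (ψ 1 y) + br (ψ 1 x) y) + μ' 1 x y := by
    intro x y
    have H := congrFun (hψ_br (mySingle0 x) (mySingle0 y)) i1
    rw [hbr_single, hmap_single, hmap_single] at H
    have HL : truncMap ψ k (fun r : Fin (k + 1) => μ (r : ℕ) x y) i1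
        = μ 1 x y + ψ 1 (br x y) := by
      show (∑ i : Fin (k + 1), ∑ j : Fin (k + 1),
          if (i : ℕ) + (j : ℕ) = (i1 : ℕ) then ψ (i : ℕ) (μ (j : ℕ) x y) else 0)
        = μ 1 x y + ψ 1 (br x y)
      rw [hv1, my_dsum_one hk (fun i j => ψ (i : ℕ) (μ (j : ℕ) x y))]
      rw [Fin.val_zero, hψ0', hμ0]
    have HR : truncBr μ' k (fun r : Fin (k + 1) => ψ (r : ℕ) x)
        (fun r : Fin (k + 1) => ψ (r : ℕ) y) i1
        = (br x (ψ 1 y) + br (ψ 1 x) y) + μ' 1 x y := by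
      show (∑ a ∈ Finset.range (k + 1), ∑ i : Fin (k + 1), ∑ j : Fin (k + 1),
          if a + (i : ℕ) + (j : ℕ) = (i1 : ℕ) then μ' a (ψ (i : ℕ) x) (ψ (j : ℕ) y) else 0)
        = (br x (ψ 1 y) + br (ψ 1 x) y) + μ' 1 x y
      rw [hv1, my_tsum_one hk (fun a i j => μ' a (ψ (i : ℕ) x) (ψ (j : ℕ) y))]
      rw [Fin.val_zero, hψ0', hψ0', hμ0']
    rw [HL, HR] at H
    exact H
  -- third claim: squarings
  have claim3 : ∀ x ∈ od,
      ωs 1 x + ψ 1 (sq x) = ωs' 1 x + br x (ψ 1 x) := by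
    intro x hx
    have hmem : mySingle0 x ∈
        Submodule.pi (Set.univ : Set (Fin (k + 1))) (fun _ => od) := by
      refine Submodule.mem_pi.mpr fun i _ => ?_
      rcases eq_or_ne i 0 with h | h
      · subst h; rw [mySingle0_zero]; exact hx
      · rw [mySingle0_ne x h]; exact od.zero_mem
    have H := congrFun (hψ_sq (mySingle0 x) hmem) i1
    rw [hsq_single, hmap_single] at H
    have HL : truncMap ψ k (fun r : Fin (k + 1) => ωs (r : ℕ) x) i1
        = ωs 1 x + ψ 1 (sq x) := by
      show (∑ i : Fin (k + 1), ∑ j : Fin (k + 1),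
          if (i : ℕ) + (j : ℕ) = (i1 : ℕ) then ψ (i : ℕ) (ωs (j : ℕ) x) else 0)
        = ωs 1 x + ψ 1 (sq x)
      rw [hv1, my_dsum_one hk (fun i j => ψ (i : ℕ) (ωs (j : ℕ) x))]
      rw [Fin.val_zero, hψ0', hω0]
    have HR : truncSq μ' ωs' k (fun r : Fin (k + 1) => ψ (r : ℕ) x) i1
        = ωs' 1 x + br x (ψ 1 x) := by
      show (∑ a ∈ Finset.range (k + 1), ∑ b : Fin (k + 1),
          if a + 2 * (b : ℕ) = (i1 : ℕ) then ωs' a (ψ (b : ℕ) x) else 0) +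
        (∑ a ∈ Finset.range (k + 1), ∑ b : Fin (k + 1), ∑ c : Fin (k + 1),
          if a + (b : ℕ) + (c : ℕ) = (i1 : ℕ) ∧ (b : ℕ) < (c : ℕ)
            then μ' a (ψ (b : ℕ) x) (ψ (c : ℕ) x) else 0)
        = ωs' 1 x + br x (ψ 1 x)
      rw [hv1, my_sqsum_one hk (fun a b => ωs' a (ψ (b : ℕ) x)),
        my_sq3sum_one hk (fun a b c => μ' a (ψ (b : ℕ) x) (ψ (c : ℕ) x))]
      rw [Fin.val_zero, hψ0', hμ0']
    rw [HL, HR] at H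
    exact H
  refine ⟨fun x y => (claim1 x y).trans (add_comm _ _), fun x y => ?_, fun x hx => ?_⟩
  · have H := claim2 x y
    have h2 : μ 1 x y = (μ 1 x y + ψ 1 (br x y)) + ψ 1 (br x y) := by
      rw [add_assoc, char2P, add_zero]
    rw [h2, H]
    abel
  · have H := claim3 x hx
    have h2 : ωs 1 x = (ωs 1 x + ψ 1 (sq x)) + ψ 1 (sq x) := by
      rw [add_assoc, char2P, add_zero]
    rw [h2, H]
    abel
end

section
/- Let K be a field of characteristic 2 and (P, *, ▷) a pre-Poisson superalgebra over K. Then (P, ·, [-,-], s) is a Poisson superalgebra, where x·y := x*y + y*x, [x,y] := x▷y + y▷x for all x,y ∈ P, and s(x) := x▷x for x ∈ P₁. -/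
/-- A right Zinbiel superalgebra over a field of characteristic 2. -/
structure IsZinbiel2 (K : Type*) [Field K] {Z : Type*} [AddCommGroup Z] [Module K Z]
    (ev od : Submodule K Z) (star : Z → Z → Z) : Prop where
  compl : IsCompl ev od
  add_left : ∀ x y z : Z, star (x + y) z = star x z + star y z
  add_right : ∀ x y z : Z, star x (y + z) = star x y + star x z
  smul_left : ∀ (c : K) (x y : Z), star (c • x) y = c • star x y
  smul_right : ∀ (c : K) (x y : Z), star x (c • y) = c • star x y
  grade_ee : ∀ x ∈ ev, ∀ y ∈ ev, star x y ∈ ev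
  grade_eo : ∀ x ∈ ev, ∀ y ∈ od, star x y ∈ od
  grade_oe : ∀ x ∈ od, ∀ y ∈ ev, star x y ∈ od
  grade_oo : ∀ x ∈ od, ∀ y ∈ od, star x y ∈ ev
  zinbiel : ∀ x y z : Z, star x (star y z) = star (star y x) z + star (star x y) z
/-- A left-symmetric superalgebra in characteristic 2. -/
structure IsLeftSym2 (K : Type*) [Field K] {V : Type*} [AddCommGroup V] [Module K V]
    (ev od : Submodule K V) (tri : V → V → V) : Prop where
  compl : IsCompl ev od
  add_left : ∀ x y z : V, tri (x + y) z = tri x z + tri y z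
  add_right : ∀ x y z : V, tri x (y + z) = tri x y + tri x z
  smul_left : ∀ (c : K) (x y : V), tri (c • x) y = c • tri x y
  smul_right : ∀ (c : K) (x y : V), tri x (c • y) = c • tri x y
  grade_ee : ∀ x ∈ ev, ∀ y ∈ ev, tri x y ∈ ev
  grade_eo : ∀ x ∈ ev, ∀ y ∈ od, tri x y ∈ od
  grade_oe : ∀ x ∈ od, ∀ y ∈ ev, tri x y ∈ od
  grade_oo : ∀ x ∈ od, ∀ y ∈ od, tri x y ∈ ev
  lsym : ∀ x y z : V,
    tri x (tri y z) + tri (tri x y) z = tri y (tri x z) + tri (tri y x) z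
  lsym_od : ∀ x ∈ od, ∀ y : V, tri x (tri x y) = tri (tri x x) y
/-- A pre-Poisson superalgebra in characteristic 2: a right Zinbiel product `star` and
a left-symmetric product `tri` subject to two compatibility conditions. -/
structure IsPrePoisson2 (K : Type*) [Field K] {P : Type*} [AddCommGroup P] [Module K P]
    (ev od : Submodule K P) (star tri : P → P → P) : Prop where
  zinbiel : IsZinbiel2 K ev od star
  leftSym : IsLeftSym2 K ev od tri
  compat1 : ∀ x y z : P,
    star (tri x y + tri y x) z = tri x (star y z) + star y (tri x z)
  compat2 : ∀ x y z : P,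
    tri (star x y + star y x) z = star x (tri y z) + star y (tri x z)

/-- **Statement 18.** A pre-Poisson superalgebra `(P, *, ▷)` in characteristic 2
gives rise to a Poisson superalgebra with product `x·y = x*y + y*x`, bracket
`[x,y] = x▷y + y▷x` and squaring `s(x) = x▷x`. -/
theorem prePoisson_gives_poisson
    {K P : Type*} [Field K] [CharP K 2] [AddCommGroup P] [Module K P]
    (ev od : Submodule K P) (star tri : P → P → P)
    (hPP : IsPrePoisson2 K ev od star tri) :
    IsPoisson2 K ev od
      (fun x y => star x y + star y x)
      (fun x y => tri x y + tri y x)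
      (fun x => tri x x) := by
  obtain ⟨hz, hl, hc1, hc2⟩ := hPP
  -- characteristic-two basic facts
  have h2 : ∀ a : P, a + a = 0 := fun a => by
    have h20 : (2 : K) = 0 := by
      have := CharP.cast_eq_zero K 2; push_cast at this; exact_mod_cast this
    calc a + a = (2 : K) • a := (two_smul K a).symm
      _ = (0 : K) • a := by rw [h20]
      _ = 0 := zero_smul K a
  have move : ∀ a b c : P, a + b = c → a = c + b := fun a b c h => by
    rw [← h, add_assoc, h2 b, add_zero]
  -- solved forms of the axioms
  have f2 : ∀ x y z : P, tri x (tri y z)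
      = (tri y (tri x z) + tri (tri y x) z) + tri (tri x y) z :=
    fun x y z => move _ _ _ (hl.lsym x y z)
  have e2 : ∀ x y z : P, tri x (star y z)
      = (star (tri x y) z + star (tri y x) z) + star y (tri x z) := fun x y z => by
    have h := hc1 x y z
    rw [hz.add_left] at h
    exact move _ _ _ h.symm
  have e1 : ∀ x y : P, tri x (star x y) = star x (tri x y) := fun x y => by
    rw [e2 x x y, h2, zero_add]
  have e3 : ∀ x y : P, star x (star x y) = 0 := fun x y => by
    rw [hz.zinbiel x x y]; exact h2 _
  have s0l : ∀ a : P, star 0 a = 0 := fun a => by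
    have h := hz.smul_left (0 : K) 0 a; simpa using h
  have s0r : ∀ a : P, star a 0 = 0 := fun a => by
    have h := hz.smul_right (0 : K) a 0; simpa using h
  have z2 : ∀ a : P, (2 : ℤ) • a = 0 := fun a => by
    rw [two_zsmul]; exact h2 a
  have zn2 : ∀ a : P, (-2 : ℤ) • a = 0 := fun a => by
    rw [neg_smul, z2, neg_zero]
  have n2 : ∀ a : P, (2 : ℕ) • a = 0 := fun a => by
    rw [two_nsmul]; exact h2 a
  refine ⟨⟨hz.compl, ?_, ?_, ?_, ?_, ?_, ?_, ?_, ?_⟩,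
    ⟨hl.compl, ?_, ?_, ?_, ?_, ?_, ?_, ?_, ?_, ?_, ?_, ?_, ?_⟩, ?_, ?_⟩
  -- commAlg.add_left
  · intro a b c; rw [hz.add_left, hz.add_right]; abel
  -- commAlg.smul_left
  · intro k a b; rw [hz.smul_left, hz.smul_right, smul_add]
  -- commAlg.comm
  · intro a b; exact add_comm _ _
  -- commAlg.assoc
  · intro a b c
    simp only [hz.add_left, hz.add_right]
    rw [hz.zinbiel c a b, hz.zinbiel c b a, hz.zinbiel a b c, hz.zinbiel a c b]
    abel
  -- commAlg.alt_od
  · intro a _; exact h2 _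
  -- commAlg.grade_ee
  · intro a ha b hb; exact add_mem (hz.grade_ee a ha b hb) (hz.grade_ee b hb a ha)
  -- commAlg.grade_eo
  · intro a ha b hb; exact add_mem (hz.grade_eo a ha b hb) (hz.grade_oe b hb a ha)
  -- commAlg.grade_oo
  · intro a ha b hb; exact add_mem (hz.grade_oo a ha b hb) (hz.grade_oo b hb a ha)
  -- lieAlg.add_left
  · intro x y z; rw [hl.add_left, hl.add_right]; abel
  -- lieAlg.smul_left
  · intro c x y; rw [hl.smul_left, hl.smul_right, smul_add]
  -- lieAlg.symm
  · intro x y; exact add_comm _ _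
  -- lieAlg.alt_ev
  · intro x _; exact h2 _
  -- lieAlg.grade_ee
  · intro x hx y hy; exact add_mem (hl.grade_ee x hx y hy) (hl.grade_ee y hy x hx)
  -- lieAlg.grade_eo
  · intro x hx y hy; exact add_mem (hl.grade_eo x hx y hy) (hl.grade_oe y hy x hx)
  -- lieAlg.grade_oo
  · intro x hx y hy; exact add_mem (hl.grade_oo x hx y hy) (hl.grade_oo y hy x hx)
  -- lieAlg.jacobi_ev
  · intro x _ y _ z
    simp only [hl.add_left, hl.add_right]
    rw [f2 z x y, f2 z y x, f2 x y z]
    rw [← sub_eq_zero]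
    abel_nf
    simp [z2, zn2, n2]
  -- lieAlg.sq_mem
  · intro x hx; exact hl.grade_oo x hx x hx
  -- lieAlg.sq_smul
  · intro c x _; rw [hl.smul_left, hl.smul_right, smul_smul]
  -- lieAlg.sq_add
  · intro x _ y _; rw [hl.add_left, hl.add_right, hl.add_right]; abel
  -- lieAlg.sq_jacobi
  · intro x hx z
    simp only [hl.add_left, hl.add_right]
    rw [f2 z x x, hl.lsym_od x hx z]
    abel
  -- leibniz
  · intro x y z
    rw [hc2 x y z]
    simp only [hl.add_right, hz.add_right, hz.add_left]
    rw [e2 z x y, e2 z y x]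
    abel
  -- sq_mul
  · intro x _ y _
    rw [h2 (star x x), s0l, s0r, add_zero, zero_add]
    rw [hc2 x y (star x y + star y x)]
    simp only [hl.add_right, hz.add_right, hz.add_left]
    rw [e2 y x y, e1 y x, e1 x y, e2 x y x]
    simp only [hz.add_right]
    rw [e3 x (tri y y), e3 y (tri x x)]
    rw [hz.zinbiel x (tri y x) y, hz.zinbiel x (tri x y) y,
        hz.zinbiel x y (tri y x), hz.zinbiel y x (tri x y),
        hz.zinbiel y (tri x y) x, hz.zinbiel y (tri y x) x,
        hz.zinbiel (tri x y) x y, hz.zinbiel (tri x y) y x,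
        hz.zinbiel (tri y x) x y, hz.zinbiel (tri y x) y x]
    abel
end

section
/- Let (P, ·, {-,-}, s) be a Poisson superalgebra over a field K of characteristic 2 and let R : P → P be an even linear map which is simultaneously a Rota-Baxter operator for the associative product, i.e. R(x)·R(y) = R(R(x)·y + x·R(y)) for all x,y ∈ P, and for the Lie structure, i.e. {R(x), R(y)} = R({R(x),y} + {x,R(y)}) for all x,y ∈ P and s(R(x)) = R({R(x), x}) for all x ∈ P₁. Define x*y := R(x)·y and x▷y := {R(x), y}. Then (P, *) is a right Zinbiel superalgebra, (P, ▷) is a left-symmetric superalgebra in characteristic 2, and (P, *, ▷) is a pre-Poisson superalgebra. -/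
/-- In characteristic 2, every module element satisfies `a + a = 0`. -/
private theorem char2_double_zero {K P : Type*} [Field K] [CharP K 2] [AddCommGroup P]
    [Module K P] (a : P) : a + a = 0 := by
  have h2 : (2 : K) = 0 := by exact_mod_cast CharP.cast_eq_zero K 2
  calc a + a = (2 : K) • a := (two_smul K a).symm
    _ = (0 : K) • a := by rw [h2]
    _ = 0 := zero_smul K a

private theorem char2_eq_of_add_eq_zero {K P : Type*} [Field K] [CharP K 2]
    [AddCommGroup P] [Module K P] {a b : P} (h : a + b = 0) : a = b := by
  calc a = -b := eq_neg_of_add_eq_zero_left h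
    _ = b := neg_eq_of_add_eq_zero_left (char2_double_zero (K := K) b)

/-- The Jacobi identity holds for all triples in a Lie superalgebra in characteristic 2. -/
private theorem jac_all {K P : Type*} [Field K] [CharP K 2] [AddCommGroup P] [Module K P]
    {ev od : Submodule K P} {br : P → P → P} {sq : P → P}
    (hL : IsLieSuper2 K ev od br sq) :
    ∀ x y z : P, br (br x y) z = br x (br y z) + br y (br x z) := by
  have two0 : ∀ a : P, a + a = 0 := char2_double_zero (K := K)
  have brar : ∀ x y z : P, br x (y + z) = br x y + br x z := by
    intro x y z
    rw [hL.symm x (y + z), hL.add_left, hL.symm y x, hL.symm z x]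
  -- swap the 2nd and 3rd arguments in a Jacobi instance
  have perm : ∀ x y z : P, br (br x y) z = br x (br y z) + br y (br x z) →
      br (br x z) y = br x (br z y) + br z (br x y) := by
    intro x y z h
    rw [hL.symm (br x z) y, hL.symm z y, hL.symm z (br x y), h, ← add_assoc, two0, zero_add]
  -- swap the 1st and 2nd arguments
  have swap12 : ∀ x y z : P, br (br x y) z = br x (br y z) + br y (br x z) →
      br (br y x) z = br y (br x z) + br x (br y z) := by
    intro x y z h
    rw [hL.symm y x, h, add_comm]
  -- odd-odd case via polarization of the squaring
  have jac_oo : ∀ x ∈ od, ∀ y ∈ od, ∀ z : P,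
      br (br x y) z = br x (br y z) + br y (br x z) := by
    intro x hx y hy z
    have hxy : x + y ∈ od := add_mem hx hy
    have h1 : br (sq (x + y)) z = br (sq x) z + br (sq y) z + br (br x y) z := by
      rw [hL.sq_add x hx y hy, hL.add_left, hL.add_left]
    have h2 : br (sq (x + y)) z
        = br (sq x) z + br (sq y) z + (br x (br y z) + br y (br x z)) := by
      rw [hL.sq_jacobi (x + y) hxy, hL.add_left x y z, hL.add_left x y, brar, brar,
        ← hL.sq_jacobi x hx, ← hL.sq_jacobi y hy]
      abel
    exact add_left_cancel (h1.symm.trans h2)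
  have jac_ee : ∀ x ∈ ev, ∀ y ∈ ev, ∀ z : P,
      br (br x y) z = br x (br y z) + br y (br x z) := hL.jacobi_ev
  -- even-odd case, using full symmetry of the Jacobiator
  have jac_eo : ∀ x ∈ ev, ∀ y ∈ od, ∀ z : P,
      br (br x y) z = br x (br y z) + br y (br x z) := by
    intro x hx y hy z
    obtain ⟨ze, zo, hze, hzo, rfl⟩ :=
      Submodule.codisjoint_iff_exists_add_eq.mp hL.compl.codisjoint z
    have he : br (br x y) ze = br x (br y ze) + br y (br x ze) :=
      perm x ze y (jac_ee x hx ze hze y)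
    have ho : br (br x y) zo = br x (br y zo) + br y (br x zo) :=
      swap12 y x zo (perm y zo x (jac_oo y hy zo hzo x))
    rw [brar, brar, brar, brar, brar, he, ho]
    abel
  have jac_oe : ∀ x ∈ od, ∀ y ∈ ev, ∀ z : P,
      br (br x y) z = br x (br y z) + br y (br x z) := by
    intro x hx y hy z
    exact swap12 y x z (jac_eo y hy x hx z)
  intro x y z
  obtain ⟨xe, xo, hxe, hxo, rfl⟩ :=
    Submodule.codisjoint_iff_exists_add_eq.mp hL.compl.codisjoint x
  obtain ⟨ye, yo, hye, hyo, rfl⟩ :=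
    Submodule.codisjoint_iff_exists_add_eq.mp hL.compl.codisjoint y
  rw [hL.add_left xe xo (ye + yo), brar xe ye yo, brar xo ye yo,
    hL.add_left (br xe ye + br xe yo) (br xo ye + br xo yo) z,
    hL.add_left (br xe ye) (br xe yo) z, hL.add_left (br xo ye) (br xo yo) z,
    hL.add_left ye yo z, hL.add_left xe xo z,
    hL.add_left xe xo (br ye z + br yo z), hL.add_left ye yo (br xe z + br xo z),
    brar xe (br ye z) (br yo z), brar xo (br ye z) (br yo z),
    brar ye (br xe z) (br xo z), brar yo (br xe z) (br xo z),
    jac_ee xe hxe ye hye z, jac_eo xe hxe yo hyo z,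
    jac_oe xo hxo ye hye z, jac_oo xo hxo yo hyo z]
  abel


/-- **Statement 19.** Let `(P, mul, br, sq)` be a Poisson superalgebra in
characteristic 2 and let `R` be an even linear map which is simultaneously a
Rota-Baxter operator for the associative product and for the Lie structure.  Then
`x*y = R(x)·y` is a right Zinbiel product, `x▷y = {R(x), y}` is a left-symmetric
product, and together they form a pre-Poisson superalgebra. -/
theorem rotaBaxter_gives_prePoisson
    {K P : Type*} [Field K] [CharP K 2] [AddCommGroup P] [Module K P]
    (ev od : Submodule K P) (mul br : P → P → P) (sq : P → P)
    (hP : IsPoisson2 K ev od mul br sq)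
    (R : P → P)
    (hR_add : ∀ x y : P, R (x + y) = R x + R y)
    (hR_smul : ∀ (c : K) (x : P), R (c • x) = c • R x)
    (hR_even_ev : ∀ x ∈ ev, R x ∈ ev)
    (hR_even_od : ∀ x ∈ od, R x ∈ od)
    (hRB_mul : ∀ x y : P, mul (R x) (R y) = R (mul (R x) y + mul x (R y)))
    (hRB_br : ∀ x y : P, br (R x) (R y) = R (br (R x) y + br x (R y)))
    (hRB_sq : ∀ x ∈ od, sq (R x) = R (br (R x) x)) :
    IsZinbiel2 K ev od (fun x y => mul (R x) y) ∧
    IsLeftSym2 K ev od (fun x y => br (R x) y) ∧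
    IsPrePoisson2 K ev od (fun x y => mul (R x) y) (fun x y => br (R x) y) := by
  obtain ⟨hC, hL, hLeib, _hsqmul⟩ := hP
  have two0 : ∀ a : P, a + a = 0 := char2_double_zero (K := K)
  have jac := jac_all hL
  have mular : ∀ x y z : P, mul x (y + z) = mul x y + mul x z := by
    intro x y z; rw [hC.comm x (y + z), hC.add_left, hC.comm y x, hC.comm z x]
  have mulsr : ∀ (c : K) (x y : P), mul x (c • y) = c • mul x y := by
    intro c x y; rw [hC.comm x (c • y), hC.smul_left, hC.comm y x]
  have brar : ∀ x y z : P, br x (y + z) = br x y + br x z := by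
    intro x y z; rw [hL.symm x (y + z), hL.add_left, hL.symm y x, hL.symm z x]
  have brsr : ∀ (c : K) (x y : P), br x (c • y) = c • br x y := by
    intro c x y; rw [hL.symm x (c • y), hL.smul_left, hL.symm y x]
  have hZ : IsZinbiel2 K ev od (fun x y => mul (R x) y) := by
    refine ⟨hC.compl, ?_, ?_, ?_, ?_, ?_, ?_, ?_, ?_, ?_⟩
    · intro x y z; rw [hR_add, hC.add_left]
    · intro x y z; rw [mular]
    · intro c x y; rw [hR_smul, hC.smul_left]
    · intro c x y; rw [mulsr]
    · intro x hx y hy; exact hC.grade_ee _ (hR_even_ev x hx) y hy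
    · intro x hx y hy; exact hC.grade_eo _ (hR_even_ev x hx) y hy
    · intro x hx y hy; rw [hC.comm]
      exact hC.grade_eo y hy _ (hR_even_od x hx)
    · intro x hx y hy; exact hC.grade_oo _ (hR_even_od x hx) y hy
    · intro x y z
      rw [← hC.add_left, ← hR_add, hC.comm (R x) y, ← hRB_mul y x,
        hC.comm (R y) (R x), hC.assoc]
  have hT : IsLeftSym2 K ev od (fun x y => br (R x) y) := by
    refine ⟨hL.compl, ?_, ?_, ?_, ?_, ?_, ?_, ?_, ?_, ?_, ?_⟩
    · intro x y z; rw [hR_add, hL.add_left]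
    · intro x y z; rw [brar]
    · intro c x y; rw [hR_smul, hL.smul_left]
    · intro c x y; rw [brsr]
    · intro x hx y hy; exact hL.grade_ee _ (hR_even_ev x hx) y hy
    · intro x hx y hy; exact hL.grade_eo _ (hR_even_ev x hx) y hy
    · intro x hx y hy; rw [hL.symm]
      exact hL.grade_eo y hy _ (hR_even_od x hx)
    · intro x hx y hy; exact hL.grade_oo _ (hR_even_od x hx) y hy
    · intro x y z
      have hj := jac (R x) (R y) z
      have hb : R (br (R x) y) + R (br (R y) x) = br (R x) (R y) := by
        rw [← hR_add, hL.symm (R y) x]; exact (hRB_br x y).symm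
      apply char2_eq_of_add_eq_zero (K := K)
      have e1 : br (R (br (R x) y)) z + br (R (br (R y) x)) z
          = br (br (R x) (R y)) z := by rw [← hL.add_left, hb]
      have re : (br (R x) (br (R y) z) + br (R (br (R x) y)) z)
            + (br (R y) (br (R x) z) + br (R (br (R y) x)) z)
          = (br (R x) (br (R y) z) + br (R y) (br (R x) z))
            + (br (R (br (R x) y)) z + br (R (br (R y) x)) z) := by abel
      rw [re, ← hj, e1, two0]
    · intro x hx y
      rw [← hRB_sq x hx, hL.sq_jacobi (R x) (hR_even_od x hx) y]
  have c1 : ∀ x y z : P,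
      mul (R (br (R x) y + br (R y) x)) z
        = br (R x) (mul (R y) z) + mul (R y) (br (R x) z) := by
    intro x y z
    rw [hL.symm (R y) x, ← hRB_br x y, hL.symm (R x) (mul (R y) z),
      hLeib (R y) z (R x), hL.symm z (R x), hL.symm (R y) (R x),
      add_right_comm, two0, zero_add]
  have c2 : ∀ x y z : P,
      br (R (mul (R x) y + mul (R y) x)) z
        = mul (R x) (br (R y) z) + mul (R y) (br (R x) z) := by
    intro x y z
    rw [hC.comm (R y) x, ← hRB_mul x y, hLeib (R x) (R y) z,
      hC.comm (br (R x) z) (R y)]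
  exact ⟨hZ, hT, hZ, hT, c1, c2⟩
end
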